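/- arXiv:2007.14360 — 5 statements merged into one kernel-verified Lean document; each statement's English description precedes it below -/
import Mathlib

section
/- Let K_j : ℤ → ℂ for dyadic j = 2^m be functions, each supported in [-j, j] with ∑_y |K_j(y)|² ≤ 1/j. Then for any dyadic s and any x with |x| ≤ 2s, the tail sum satisfies ∑_{j > s, j dyadic} |(𝟙_{[-4s,4s]} * K_j)(x)| ≤ (8s)^{1/2} ∑_{j > s dyadic} j^{-1/2} ≤ 8^{1/2}/(√2 - 1), a universal constant. -/
/-- Convolution on ℤ. -/
noncomputable def conv (f g : ℤ → ℂ) : ℤ → ℂ := fun x => ∑' y : ℤ, f (x - y) * g y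

/-- Indicator of [-4·2ⁿ, 4·2ⁿ]. -/
noncomputable def ind4 (n : ℕ) : ℤ → ℂ := fun x => if |x| ≤ (4 * 2 ^ n : ℤ) then 1 else 0

lemma sqrt_two_pow (m : ℕ) : Real.sqrt (2 ^ m) = Real.sqrt 2 ^ m := by
  have h : (Real.sqrt 2 ^ m) ^ 2 = 2 ^ m := by
    rw [← pow_mul, mul_comm, pow_mul, Real.sq_sqrt (by norm_num)]
  rw [← h, Real.sqrt_sq (by positivity)]

lemma conv_bound (K : ℕ → ℤ → ℂ)
    (hsupp : ∀ m x, (2 ^ m : ℤ) < |x| → K m x = 0)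
    (hl2 : ∀ m, (∑' y : ℤ, ‖K m y‖ ^ 2) ≤ 1 / 2 ^ m)
    (n m : ℕ) (x : ℤ) (C : ℝ) (hC : 0 ≤ C)
    (hcard : (((Finset.Icc (x - 4 * 2 ^ n) (x + 4 * 2 ^ n)) ∩
        (Finset.Icc (-(2 : ℤ) ^ m) (2 ^ m))).card : ℝ) ≤ C) :
    ‖conv (ind4 n) (K m) x‖ ≤ Real.sqrt C * (Real.sqrt 2 ^ m)⁻¹ := by
  set T := (Finset.Icc (x - 4 * 2 ^ n) (x + 4 * 2 ^ n)) ∩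
      (Finset.Icc (-(2 : ℤ) ^ m) (2 ^ m)) with hT
  have hzero : ∀ y ∉ T, ind4 n (x - y) * K m y = 0 := by
    intro y hy
    rw [hT, Finset.mem_inter] at hy
    push_neg at hy
    by_cases h1 : y ∈ Finset.Icc (x - 4 * 2 ^ n) (x + 4 * 2 ^ n)
    · have h2 := hy h1
      rw [Finset.mem_Icc] at h2
      have : (2 : ℤ) ^ m < |y| := by
        rcases abs_cases y with ⟨he, _⟩ | ⟨he, _⟩ <;> omega
      rw [hsupp m y this, mul_zero]
    · rw [Finset.mem_Icc] at h1
      have : ¬ (|x - y| ≤ 4 * 2 ^ n) := by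
        rw [abs_le]; omega
      unfold ind4
      rw [if_neg this, zero_mul]
  have h1 : conv (ind4 n) (K m) x = ∑ y ∈ T, ind4 n (x - y) * K m y := tsum_eq_sum hzero
  have h2 : ‖conv (ind4 n) (K m) x‖ ≤ ∑ y ∈ T, ‖K m y‖ := by
    rw [h1]
    refine (norm_sum_le _ _).trans (Finset.sum_le_sum fun y _ => ?_)
    rw [norm_mul]
    have : ‖ind4 n (x - y)‖ ≤ 1 := by
      unfold ind4; split <;> simp
    calc ‖ind4 n (x - y)‖ * ‖K m y‖ ≤ 1 * ‖K m y‖ := by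
          exact mul_le_mul_of_nonneg_right this (norm_nonneg _)
      _ = ‖K m y‖ := one_mul _
  have hsummable : Summable (fun y : ℤ => ‖K m y‖ ^ 2) := by
    apply summable_of_ne_finset_zero (s := Finset.Icc (-(2 : ℤ) ^ m) (2 ^ m))
    intro y hy
    rw [Finset.mem_Icc] at hy
    have : (2 : ℤ) ^ m < |y| := by
      rcases abs_cases y with ⟨he, _⟩ | ⟨he, _⟩ <;> omega
    rw [hsupp m y this]; simp
  have hQ : ∑ y ∈ T, ‖K m y‖ ^ 2 ≤ 1 / 2 ^ m :=
    (Summable.sum_le_tsum T (fun y _ => by positivity) hsummable).trans (hl2 m)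
  have hcs : (∑ y ∈ T, ‖K m y‖) ^ 2 ≤ T.card * ∑ y ∈ T, ‖K m y‖ ^ 2 :=
    sq_sum_le_card_mul_sum_sq
  have hq0 : (0:ℝ) ≤ ∑ y ∈ T, ‖K m y‖ ^ 2 := by positivity
  have hfin : (∑ y ∈ T, ‖K m y‖) ^ 2 ≤ C * (1 / 2 ^ m) := by
    refine hcs.trans ?_
    exact mul_le_mul hcard hQ hq0 hC
  have hle : ∑ y ∈ T, ‖K m y‖ ≤ Real.sqrt (C * (1 / 2 ^ m)) :=
    Real.le_sqrt_of_sq_le hfin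
  refine h2.trans (hle.trans_eq ?_)
  rw [Real.sqrt_mul hC, one_div, Real.sqrt_inv, sqrt_two_pow]

lemma cardA (n m : ℕ) (x : ℤ) :
    ((((Finset.Icc (x - 4 * 2 ^ n) (x + 4 * 2 ^ n)) ∩
        (Finset.Icc (-(2 : ℤ) ^ m) (2 ^ m))).card : ℝ)) ≤ 9 * 2 ^ n := by
  have h1 : ((Finset.Icc (x - 4 * 2 ^ n) (x + 4 * 2 ^ n)) ∩
      (Finset.Icc (-(2 : ℤ) ^ m) (2 ^ m))).card ≤
      (Finset.Icc (x - 4 * 2 ^ n) (x + 4 * 2 ^ n)).card :=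
    Finset.card_le_card Finset.inter_subset_left
  have h2 : (Finset.Icc (x - 4 * 2 ^ n) (x + 4 * 2 ^ n)).card = (8 * 2 ^ n + 1 : ℤ).toNat := by
    rw [Int.card_Icc]; congr 1; ring
  have h3 : ((8 * 2 ^ n + 1 : ℤ).toNat : ℝ) = 8 * 2 ^ n + 1 := by
    have h4 : (0:ℤ) ≤ 8 * 2 ^ n + 1 := by positivity
    rw [← Int.cast_natCast, Int.toNat_of_nonneg h4]
    push_cast; ring
  have h5 : (1:ℝ) ≤ 2 ^ n := one_le_pow₀ (by norm_num)
  calc ((((Finset.Icc (x - 4 * 2 ^ n) (x + 4 * 2 ^ n)) ∩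
        (Finset.Icc (-(2 : ℤ) ^ m) (2 ^ m))).card : ℝ))
      ≤ (((Finset.Icc (x - 4 * 2 ^ n) (x + 4 * 2 ^ n)).card : ℕ) : ℝ) := by exact_mod_cast h1
    _ = 8 * 2 ^ n + 1 := by rw [h2, h3]
    _ ≤ 9 * 2 ^ n := by linarith

lemma cardB (n : ℕ) (x : ℤ) :
    ((((Finset.Icc (x - 4 * 2 ^ n) (x + 4 * 2 ^ n)) ∩
        (Finset.Icc (-(2 : ℤ) ^ (n+1)) (2 ^ (n+1)))).card : ℝ)) ≤ 5 * 2 ^ n := by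
  have h1 : ((Finset.Icc (x - 4 * 2 ^ n) (x + 4 * 2 ^ n)) ∩
      (Finset.Icc (-(2 : ℤ) ^ (n+1)) (2 ^ (n+1)))).card ≤
      (Finset.Icc (-(2 : ℤ) ^ (n+1)) (2 ^ (n+1))).card :=
    Finset.card_le_card Finset.inter_subset_right
  have h2 : (Finset.Icc (-(2 : ℤ) ^ (n+1)) (2 ^ (n+1))).card = (4 * 2 ^ n + 1 : ℤ).toNat := by
    rw [Int.card_Icc]; congr 1; ring
  have h3 : ((4 * 2 ^ n + 1 : ℤ).toNat : ℝ) = 4 * 2 ^ n + 1 := by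
    have h4 : (0:ℤ) ≤ 4 * 2 ^ n + 1 := by positivity
    rw [← Int.cast_natCast, Int.toNat_of_nonneg h4]
    push_cast; ring
  have h5 : (1:ℝ) ≤ 2 ^ n := one_le_pow₀ (by norm_num)
  calc ((((Finset.Icc (x - 4 * 2 ^ n) (x + 4 * 2 ^ n)) ∩
        (Finset.Icc (-(2 : ℤ) ^ (n+1)) (2 ^ (n+1)))).card : ℝ))
      ≤ (((Finset.Icc (-(2 : ℤ) ^ (n+1)) (2 ^ (n+1))).card : ℕ) : ℝ) := by exact_mod_cast h1
    _ = 4 * 2 ^ n + 1 := by rw [h2, h3]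
    _ ≤ 5 * 2 ^ n := by linarith

/-- tail estimate for convolutions of blocks of dyadic scales `j = 2^m > s = 2^n`. -/
theorem stmt1 (K : ℕ → ℤ → ℂ)
    (hsupp : ∀ m x, (2 ^ m : ℤ) < |x| → K m x = 0)
    (hl2 : ∀ m, (∑' y : ℤ, ‖K m y‖ ^ 2) ≤ 1 / 2 ^ m)
    (n : ℕ) (x : ℤ) (hx : |x| ≤ (2 * 2 ^ n : ℤ)) :
    (∑' m : {m : ℕ // n < m}, ‖conv (ind4 n) (K m) x‖) ≤
        Real.sqrt (8 * 2 ^ n) * ∑' m : {m : ℕ // n < m}, (Real.sqrt (2 ^ (m : ℕ)))⁻¹ ∧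
      Real.sqrt (8 * 2 ^ n) * (∑' m : {m : ℕ // n < m}, (Real.sqrt (2 ^ (m : ℕ)))⁻¹) ≤
        Real.sqrt 8 / (Real.sqrt 2 - 1) := by
  set s2 := Real.sqrt 2 with hs2def
  have hs2sq : s2 ^ 2 = 2 := Real.sq_sqrt (by norm_num)
  have hs2pos : 0 < s2 := Real.sqrt_pos.mpr (by norm_num)
  have hs2gt1 : 1 < s2 := by nlinarith
  set r := s2⁻¹ with hrdef
  have hr0 : 0 < r := by positivity
  have hsr1 : s2 * r = 1 := mul_inv_cancel₀ hs2pos.ne'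
  have hr1 : r < 1 := by
    rw [hrdef]
    rw [inv_lt_one_iff₀]
    right; exact hs2gt1
  have h1r : 0 < 1 - r := by linarith
  have hu : 0 < (1 - r)⁻¹ := inv_pos.mpr h1r
  have h1ru : (1 - r) * (1 - r)⁻¹ = 1 := mul_inv_cancel₀ h1r.ne'
  have hgeo : ∑' k : ℕ, r ^ k = (1 - r)⁻¹ := tsum_geometric_of_lt_one hr0.le hr1
  have hpowinv : ∀ j : ℕ, (Real.sqrt (2 ^ j))⁻¹ = r ^ j := by
    intro j
    rw [sqrt_two_pow, ← hs2def, hrdef, inv_pow]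
  -- the equivalence
  let e : ℕ ≃ {m : ℕ // n < m} :=
    ⟨fun k => ⟨n + 1 + k, by omega⟩,
     fun m => m.1 - (n + 1),
     fun k => by simp,
     fun m => Subtype.ext (by have := m.2; simp; omega)⟩
  -- value of the RHS tsum
  have hT : (∑' m : {m : ℕ // n < m}, (Real.sqrt (2 ^ (m : ℕ)))⁻¹) = r ^ (n + 1) * (1 - r)⁻¹ := by
    rw [← Equiv.tsum_eq e]
    have hc : ∀ k : ℕ, (Real.sqrt (2 ^ ((e k : {m : ℕ // n < m}) : ℕ)))⁻¹ = r ^ (n + 1) * r ^ k := by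
      intro k
      have hval : ((e k : {m : ℕ // n < m}) : ℕ) = n + 1 + k := rfl
      rw [hval, hpowinv, pow_add]
    rw [tsum_congr hc, tsum_mul_left, hgeo]
  -- algebraic facts
  have hp : s2 ^ n * r ^ (n + 1) = r := by
    rw [pow_succ, ← mul_assoc, ← mul_pow, hsr1, one_pow, one_mul]
  have hp2 : s2 ^ n * r ^ (n + 2) = r * r := by
    rw [show n + 2 = (n + 1) + 1 from rfl, pow_succ, ← mul_assoc, hp]
  have h8 : Real.sqrt (8 * 2 ^ n) = Real.sqrt 8 * s2 ^ n := by
    rw [Real.sqrt_mul (by norm_num), sqrt_two_pow, hs2def]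
  have h8' : Real.sqrt 8 = 2 * s2 := by
    rw [show (8 : ℝ) = 2 ^ 2 * 2 by norm_num, Real.sqrt_mul (by positivity),
      Real.sqrt_sq (by norm_num), hs2def]
  -- numeric core inequality
  have h5sq : Real.sqrt 5 ^ 2 = 5 := Real.sq_sqrt (by norm_num)
  have h5ge : (2 : ℝ) ≤ Real.sqrt 5 := by
    have : (2 : ℝ) ≤ Real.sqrt 5 ↔ (2 : ℝ) ^ 2 ≤ 5 := Real.le_sqrt (by norm_num) (by norm_num)
    exact this.mpr (by norm_num)
  have key : Real.sqrt 5 * s2 ≤ 1 + Real.sqrt 5 := by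
    have h10 : (Real.sqrt 5 * s2) ^ 2 = 10 := by
      rw [mul_pow, h5sq, hs2sq]; norm_num
    have h11 : (10 : ℝ) ≤ (1 + Real.sqrt 5) ^ 2 := by nlinarith
    have h12 : (Real.sqrt 5 * s2) ^ 2 ≤ (1 + Real.sqrt 5) ^ 2 := by rw [h10]; exact h11
    have hA : (0:ℝ) ≤ Real.sqrt 5 * s2 := by positivity
    have hB : (0:ℝ) ≤ 1 + Real.sqrt 5 := by positivity
    nlinarith [h12, hA, hB]
  have key3 : Real.sqrt 5 ≤ (1 + Real.sqrt 5) * r := by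
    calc Real.sqrt 5 = Real.sqrt 5 * (s2 * r) := by rw [hsr1, mul_one]
      _ = (Real.sqrt 5 * s2) * r := by ring
      _ ≤ (1 + Real.sqrt 5) * r := mul_le_mul_of_nonneg_right key hr0.le
  have hs2_2r : s2 = 2 * r := by
    calc s2 = s2 * (s2 * r) := by rw [hsr1, mul_one]
      _ = s2 ^ 2 * r := by ring
      _ = 2 * r := by rw [hs2sq]
  have hnum : Real.sqrt 5 * (1 - r) + 3 * r ≤ 2 * s2 := by
    have : Real.sqrt 5 * (1 - r) + 3 * r ≤ (1 + Real.sqrt 5) * r - Real.sqrt 5 * r + 3 * r := by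
      nlinarith [key3]
    calc Real.sqrt 5 * (1 - r) + 3 * r ≤ (1 + Real.sqrt 5) * r - Real.sqrt 5 * r + 3 * r := this
      _ = 4 * r := by ring
      _ = 2 * s2 := by rw [hs2_2r]; ring
  have key2 : Real.sqrt 5 * r + 3 * (r * r) * (1 - r)⁻¹ ≤ 2 * s2 * (r * (1 - r)⁻¹) := by
    have step := mul_le_mul_of_nonneg_right (mul_le_mul_of_nonneg_right hnum hr0.le) hu.le
    have expand : (Real.sqrt 5 * (1 - r) + 3 * r) * r * (1 - r)⁻¹ =
        Real.sqrt 5 * r * ((1 - r) * (1 - r)⁻¹) + 3 * (r * r) * (1 - r)⁻¹ := by ring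
    rw [expand, h1ru, mul_one] at step
    calc Real.sqrt 5 * r + 3 * (r * r) * (1 - r)⁻¹ ≤ 2 * s2 * r * (1 - r)⁻¹ := step
      _ = 2 * s2 * (r * (1 - r)⁻¹) := by ring
  -- per-term bounds
  set b : ℕ → ℝ := fun k =>
    (if k = 0 then Real.sqrt (5 * 2 ^ n) else Real.sqrt (9 * 2 ^ n)) * r ^ (n + 1 + k) with hbdef
  set g : ℕ → ℝ := fun k => ‖conv (ind4 n) (K (n + 1 + k)) x‖ with hgdef
  have per : ∀ k : ℕ, g k ≤ b k := by
    intro k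
    cases k with
    | zero =>
      have h := conv_bound K hsupp hl2 n (n + 1) x (5 * 2 ^ n) (by positivity) (cardB n x)
      rw [← hs2def, ← inv_pow, ← hrdef] at h
      simpa [hbdef, hgdef] using h
    | succ k =>
      have h := conv_bound K hsupp hl2 n (n + 1 + (k + 1)) x (9 * 2 ^ n) (by positivity)
        (cardA n (n + 1 + (k + 1)) x)
      rw [← hs2def, ← inv_pow, ← hrdef] at h
      simpa [hbdef, hgdef] using h
  have hble : ∀ k : ℕ, b k ≤ (Real.sqrt (9 * 2 ^ n) * r ^ (n + 1)) * r ^ k := by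
    intro k
    rw [hbdef]
    simp only [pow_add]
    rw [← mul_assoc]
    refine mul_le_mul_of_nonneg_right ?_ (by positivity)
    refine mul_le_mul_of_nonneg_right ?_ (by positivity)
    split
    · exact Real.sqrt_le_sqrt (by nlinarith [pow_pos (show (0:ℝ) < 2 by norm_num) n])
    · exact le_refl _
  have hbnn : ∀ k : ℕ, 0 ≤ b k := by
    intro k; rw [hbdef]; dsimp only; split <;> positivity
  have hbsum : Summable b :=
    Summable.of_nonneg_of_le hbnn hble
      (((summable_geometric_of_lt_one hr0.le hr1)).mul_left _)
  have hgsum : Summable g :=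
    Summable.of_nonneg_of_le (fun k => norm_nonneg _) per hbsum
  have hL : (∑' m : {m : ℕ // n < m}, ‖conv (ind4 n) (K m) x‖) = ∑' k : ℕ, g k := by
    rw [← Equiv.tsum_eq e]
    exact tsum_congr fun k => rfl
  have hgb : ∑' k : ℕ, g k ≤ ∑' k : ℕ, b k := Summable.tsum_le_tsum per hgsum hbsum
  have hbval : ∑' k : ℕ, b k =
      Real.sqrt (5 * 2 ^ n) * r ^ (n + 1) + (Real.sqrt (9 * 2 ^ n) * r ^ (n + 2)) * (1 - r)⁻¹ := by
    rw [Summable.tsum_eq_zero_add hbsum]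
    have hb0 : b 0 = Real.sqrt (5 * 2 ^ n) * r ^ (n + 1) := by
      rw [hbdef]; simp
    have hbk : ∀ k : ℕ, b (k + 1) = (Real.sqrt (9 * 2 ^ n) * r ^ (n + 2)) * r ^ k := by
      intro k
      rw [hbdef]
      simp only [Nat.succ_ne_zero, if_false]
      rw [show n + 1 + (k + 1) = (n + 2) + k by omega, pow_add]
      ring
    rw [hb0, tsum_congr hbk, tsum_mul_left, hgeo]
  have h5' : Real.sqrt (5 * 2 ^ n) = Real.sqrt 5 * s2 ^ n := by
    rw [Real.sqrt_mul (by norm_num), sqrt_two_pow, hs2def]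
  have h9' : Real.sqrt (9 * 2 ^ n) = 3 * s2 ^ n := by
    rw [Real.sqrt_mul (by norm_num), sqrt_two_pow, hs2def,
      show (9 : ℝ) = 3 ^ 2 by norm_num, Real.sqrt_sq (by norm_num)]
  have hfinal : Real.sqrt (5 * 2 ^ n) * r ^ (n + 1) +
      (Real.sqrt (9 * 2 ^ n) * r ^ (n + 2)) * (1 - r)⁻¹ ≤
      Real.sqrt (8 * 2 ^ n) * (r ^ (n + 1) * (1 - r)⁻¹) := by
    calc Real.sqrt (5 * 2 ^ n) * r ^ (n + 1) +
        (Real.sqrt (9 * 2 ^ n) * r ^ (n + 2)) * (1 - r)⁻¹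
        = Real.sqrt 5 * (s2 ^ n * r ^ (n + 1)) + 3 * (s2 ^ n * r ^ (n + 2)) * (1 - r)⁻¹ := by
          rw [h5', h9']; ring
      _ = Real.sqrt 5 * r + 3 * (r * r) * (1 - r)⁻¹ := by rw [hp, hp2]
      _ ≤ 2 * s2 * (r * (1 - r)⁻¹) := key2
      _ = 2 * s2 * ((s2 ^ n * r ^ (n + 1)) * (1 - r)⁻¹) := by rw [hp]
      _ = (2 * s2 * s2 ^ n) * (r ^ (n + 1) * (1 - r)⁻¹) := by ring
      _ = Real.sqrt (8 * 2 ^ n) * (r ^ (n + 1) * (1 - r)⁻¹) := by rw [h8, h8']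
  constructor
  · rw [hL, hT]
    calc ∑' k : ℕ, g k ≤ ∑' k : ℕ, b k := hgb
      _ = Real.sqrt (5 * 2 ^ n) * r ^ (n + 1) +
          (Real.sqrt (9 * 2 ^ n) * r ^ (n + 2)) * (1 - r)⁻¹ := hbval
      _ ≤ Real.sqrt (8 * 2 ^ n) * (r ^ (n + 1) * (1 - r)⁻¹) := hfinal
  · rw [hT]
    have e2 : r * (1 - r)⁻¹ = (s2 - 1)⁻¹ := by
      have hm : (s2 - 1) * (r * (1 - r)⁻¹) = 1 := by
        have h1 : (s2 - 1) * r = 1 - r := by rw [sub_mul, hsr1, one_mul]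
        calc (s2 - 1) * (r * (1 - r)⁻¹) = ((s2 - 1) * r) * (1 - r)⁻¹ := by ring
          _ = (1 - r) * (1 - r)⁻¹ := by rw [h1]
          _ = 1 := h1ru
      exact eq_inv_of_mul_eq_one_right hm
    have heq : Real.sqrt (8 * 2 ^ n) * (r ^ (n + 1) * (1 - r)⁻¹) = Real.sqrt 8 / (s2 - 1) := by
      rw [h8]
      calc Real.sqrt 8 * s2 ^ n * (r ^ (n + 1) * (1 - r)⁻¹)
          = Real.sqrt 8 * ((s2 ^ n * r ^ (n + 1)) * (1 - r)⁻¹) := by ring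
        _ = Real.sqrt 8 * (r * (1 - r)⁻¹) := by rw [hp]
        _ = Real.sqrt 8 * (s2 - 1)⁻¹ := by rw [e2]
        _ = Real.sqrt 8 / (s2 - 1) := by rw [div_eq_mul_inv]
    exact le_of_eq heq
end

section
/- Let K = ∑_{j dyadic, 𝒥 ≤ j ≤ ℳ} K_j where each K_j : ℤ → ℂ is supported in [-j, j] with ∑_y |K_j(y)|² ≤ 1/j, and suppose the convolution operator f ↦ K * f has ℓ²(ℤ) operator norm at most 1. Then for every dyadic s with 𝒥 ≤ s ≤ ℳ, the partial-sum means satisfy |∑_{j dyadic, 𝒥 ≤ j ≤ s} ∑_y K_j(y)| ≤ C, for a universal constant C independent of s, 𝒥, ℳ. -/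
open Finset

private lemma my_sqrt_pow (x : ℝ) (hx : 0 ≤ x) : ∀ n : ℕ,
    Real.sqrt (x ^ n) = Real.sqrt x ^ n
  | 0 => by simp
  | n+1 => by
      rw [pow_succ, pow_succ, Real.sqrt_mul (pow_nonneg hx n), my_sqrt_pow x hx n]

/-- uniform bound on cumulative means of the building blocks of an
ℓ²-bounded kernel `K = ∑_{J ≤ m ≤ Mx} K_{2^m}`. -/
theorem stmt2 : ∃ C : ℝ, 0 < C ∧ ∀ (J Mx : ℕ) (K : ℕ → ℤ → ℂ),
    (∀ m, m < J ∨ Mx < m → K m = 0) →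
    (∀ m x, (2 ^ m : ℤ) < |x| → K m x = 0) →
    (∀ m, (∑' y : ℤ, ‖K m y‖ ^ 2) ≤ 1 / 2 ^ m) →
    (∀ f : ℤ → ℂ, (Function.support f).Finite →
      (∑' x : ℤ, ‖conv (fun y => ∑ m ∈ Finset.Icc J Mx, K m y) f x‖ ^ 2) ≤
        ∑' x : ℤ, ‖f x‖ ^ 2) →
    ∀ n, J ≤ n → n ≤ Mx →
      ‖∑ m ∈ Finset.Icc J n, ∑' y : ℤ, K m y‖ ≤ C := by
  refine ⟨11, by norm_num, ?_⟩
  intro J Mx K hK0 hKsupp hKl2 hOp n hJn hnM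
  by_cases hS11 : ‖∑ m ∈ Finset.Icc J n, ∑' y : ℤ, K m y‖ ≤ 11
  · exact hS11
  exfalso
  push_neg at hS11
  set S : ℂ := ∑ m ∈ Finset.Icc J n, ∑' y : ℤ, K m y with hSdef
  set I : Finset ℤ := Finset.Icc (-(2 * 2 ^ n)) (2 * 2 ^ n) with hIdef
  set f : ℤ → ℂ := fun y => if y ∈ I then 1 else 0 with hfdef
  set g : ℤ → ℂ := fun y => ∑ m ∈ Finset.Icc J Mx, K m y with hgdef
  have hffin : (Function.support f).Finite := by
    apply Set.Finite.subset I.finite_toSet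
    intro y hy
    by_contra h
    have h' : y ∉ I := fun hc => h hc
    exact hy (by simp [hfdef, h'])
  -- finite support of each K m
  have hKfin : ∀ m : ℕ, ∀ x : ℤ, x ∉ Finset.Icc (-(2 ^ m) : ℤ) (2 ^ m) → K m x = 0 := by
    intro m x hx
    apply hKsupp
    simp only [Finset.mem_Icc, not_and_or, not_le] at hx
    rcases hx with h | h
    · exact lt_abs.mpr (Or.inr (by linarith))
    · exact lt_abs.mpr (Or.inl h)
  have hKsq : ∀ m : ℕ, Summable (fun z : ℤ => ‖K m z‖ ^ 2) := fun m =>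
    summable_of_ne_finset_zero (s := Finset.Icc (-(2 ^ m) : ℤ) (2 ^ m))
      (fun z hz => by rw [hKfin m z hz]; simp)
  -- cardinality of I
  have hcard : (I.card : ℝ) = 4 * 2 ^ n + 1 := by
    rw [hIdef, Int.card_Icc,
      show ((2 * (2:ℤ) ^ n + 1 - -(2 * 2 ^ n))) = 4 * 2 ^ n + 1 by ring]
    have h4 : (0:ℤ) ≤ 4 * 2 ^ n + 1 := by positivity
    rw [show (((4 * (2:ℤ) ^ n + 1).toNat : ℕ) : ℝ) = ((4 * (2:ℤ) ^ n + 1 : ℤ) : ℝ) by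
      rw [← Int.cast_natCast, Int.toNat_of_nonneg h4]]
    push_cast
    ring
  -- the per-scale pieces
  set T : ℕ → ℤ → ℂ := fun m x => ∑ y ∈ I, K m (x - y) * f y with hTdef
  -- Step 1: the convolution splits as a finite sum of the pieces
  have hconv : ∀ x : ℤ, conv g f x = ∑ m ∈ Finset.Icc J Mx, T m x := by
    intro x
    have h1 : ∀ y : ℤ, y ∉ I → g (x - y) * f y = 0 := by
      intro y hy
      have : f y = 0 := by simp [hfdef, hy]
      rw [this, mul_zero]
    calc conv g f x = ∑' y : ℤ, g (x - y) * f y := rfl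
      _ = ∑ y ∈ I, g (x - y) * f y := tsum_eq_sum h1
      _ = ∑ y ∈ I, ∑ m ∈ Finset.Icc J Mx, K m (x - y) * f y := by
          apply Finset.sum_congr rfl
          intro y _
          rw [hgdef]
          exact Finset.sum_mul _ _ _
      _ = ∑ m ∈ Finset.Icc J Mx, T m x := Finset.sum_comm
  have hinj : ∀ x : ℤ, ∀ a ∈ I, ∀ b ∈ I, x - a = x - b → a = b := by
    intro x a _ b _ h; omega
  -- Step 2: for m ≤ n and |x| ≤ 2^n, T m x is the full mean
  have hmain : ∀ m ∈ Finset.Icc J n, ∀ x ∈ Finset.Icc (-(2 ^ n) : ℤ) (2 ^ n),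
      T m x = ∑' y : ℤ, K m y := by
    intro m hm x hx
    simp only [Finset.mem_Icc] at hm hx
    have h2m : (2:ℤ) ^ m ≤ 2 ^ n := pow_le_pow_right₀ (by norm_num) hm.2
    have himg : Finset.Icc (-(2 ^ m) : ℤ) (2 ^ m) ⊆ I.image (fun y => x - y) := by
      intro z hz
      simp only [Finset.mem_Icc] at hz
      refine Finset.mem_image.mpr ⟨x - z, ?_, by ring⟩
      rw [hIdef]
      simp only [Finset.mem_Icc]
      constructor <;> linarith
    calc T m x = ∑ y ∈ I, K m (x - y) := by
          apply Finset.sum_congr rfl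
          intro y hy
          have : f y = 1 := by simp [hfdef, hy]
          rw [this, mul_one]
      _ = ∑ z ∈ I.image (fun y => x - y), K m z := (Finset.sum_image (hinj x)).symm
      _ = ∑ z ∈ Finset.Icc (-(2 ^ m) : ℤ) (2 ^ m), K m z :=
          (Finset.sum_subset himg (fun z _ hz => hKfin m z hz)).symm
      _ = ∑' y : ℤ, K m y := (tsum_eq_sum (hKfin m)).symm
  -- Step 3: Cauchy–Schwarz bound on every piece
  set q : ℝ := Real.sqrt (1/2) with hq
  have hq0 : 0 ≤ q := Real.sqrt_nonneg _
  have hq2 : q ^ 2 = 1/2 := Real.sq_sqrt (by norm_num)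
  have hq1 : q < 1 := by nlinarith
  have hT3 : ∀ m : ℕ, ∀ x : ℤ, ‖T m x‖ ≤ Real.sqrt (4 * 2 ^ n + 1) * q ^ m := by
    intro m x
    have hA2 : (∑ y ∈ I, ‖K m (x - y)‖) ^ 2 ≤ (4 * 2 ^ n + 1) * (1/2) ^ m := by
      have h1 : ∑ y ∈ I, ‖K m (x - y)‖ ^ 2
          = ∑ z ∈ I.image (fun y => x - y), ‖K m z‖ ^ 2 :=
          (Finset.sum_image (f := fun z => ‖K m z‖ ^ 2) (g := fun y => x - y) (hinj x)).symm
      have h2 : ∑ z ∈ I.image (fun y => x - y), ‖K m z‖ ^ 2 ≤ ∑' z : ℤ, ‖K m z‖ ^ 2 :=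
        Summable.sum_le_tsum _ (fun z _ => by positivity) (hKsq m)
      have h3 : (∑' z : ℤ, ‖K m z‖ ^ 2) ≤ (1/2) ^ m := by
        rw [one_div_pow]; exact hKl2 m
      calc (∑ y ∈ I, ‖K m (x - y)‖) ^ 2
          ≤ I.card * ∑ y ∈ I, ‖K m (x - y)‖ ^ 2 := sq_sum_le_card_mul_sum_sq
        _ ≤ (I.card : ℝ) * (1/2) ^ m := by
            apply mul_le_mul_of_nonneg_left _ (Nat.cast_nonneg _)
            rw [h1]; exact h2.trans h3
        _ = (4 * 2 ^ n + 1) * (1/2) ^ m := by rw [hcard]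
    have hA : ∑ y ∈ I, ‖K m (x - y)‖ ≤ Real.sqrt (4 * 2 ^ n + 1) * q ^ m := by
      have h0 : (0:ℝ) ≤ ∑ y ∈ I, ‖K m (x - y)‖ :=
        Finset.sum_nonneg fun _ _ => norm_nonneg _
      have hb : (0:ℝ) ≤ Real.sqrt (4 * 2 ^ n + 1) * q ^ m := by positivity
      have hrhs : (Real.sqrt (4 * 2 ^ n + 1) * q ^ m) ^ 2 = (4 * 2 ^ n + 1) * (1/2) ^ m := by
        rw [mul_pow, Real.sq_sqrt (by positivity), ← pow_mul, mul_comm m 2, pow_mul, hq2]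
      nlinarith [hA2, hrhs]
    calc ‖T m x‖ ≤ ∑ y ∈ I, ‖K m (x - y) * f y‖ := norm_sum_le _ _
      _ ≤ ∑ y ∈ I, ‖K m (x - y)‖ := by
          apply Finset.sum_le_sum
          intro y _
          rw [norm_mul]
          have hf1 : ‖f y‖ ≤ 1 := by
            rw [hfdef]
            dsimp only
            split <;> simp
          calc ‖K m (x - y)‖ * ‖f y‖ ≤ ‖K m (x - y)‖ * 1 :=
                mul_le_mul_of_nonneg_left hf1 (norm_nonneg _)
            _ = ‖K m (x - y)‖ := mul_one _
      _ ≤ _ := hA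
  -- the square-root factor collapses at scale n
  have hsqrt5 : Real.sqrt (4 * 2 ^ n + 1) * q ^ n ≤ Real.sqrt 5 := by
    have h2n1 : (1:ℝ) ≤ 2 ^ n := one_le_pow₀ (by norm_num)
    have h1 : Real.sqrt (4 * 2 ^ n + 1) ≤ Real.sqrt (5 * 2 ^ n) :=
      Real.sqrt_le_sqrt (by nlinarith)
    have h2 : Real.sqrt (5 * 2 ^ n) = Real.sqrt 5 * Real.sqrt ((2:ℝ) ^ n) := by
      rw [Real.sqrt_mul (by norm_num)]
    have h3 : Real.sqrt ((2:ℝ) ^ n) * q ^ n = 1 := by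
      rw [hq, ← my_sqrt_pow (1/2) (by norm_num) n, ← Real.sqrt_mul (by positivity),
        ← mul_pow]
      norm_num
    calc Real.sqrt (4 * 2 ^ n + 1) * q ^ n
        ≤ Real.sqrt (5 * 2 ^ n) * q ^ n := by
          apply mul_le_mul_of_nonneg_right h1 (by positivity)
      _ = Real.sqrt 5 * (Real.sqrt ((2:ℝ) ^ n) * q ^ n) := by rw [h2]; ring
      _ = Real.sqrt 5 := by rw [h3, mul_one]
  -- Step 4: key pointwise lower bound on the convolution
  have hkey : ∀ x ∈ Finset.Icc (-(2 ^ n) : ℤ) (2 ^ n), ‖S‖ - 6 ≤ ‖conv g f x‖ := by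
    intro x hx
    have hsplit : conv g f x = S + ∑ m ∈ Finset.Ico (n+1) (Mx+1), T m x := by
      rw [hconv, ← Finset.Ico_add_one_right_eq_Icc,
        ← Finset.sum_Ico_consecutive (fun m => T m x)
          (show J ≤ n + 1 by omega) (show n + 1 ≤ Mx + 1 by omega),
        Finset.Ico_add_one_right_eq_Icc]
      congr 1
      rw [hSdef]
      exact Finset.sum_congr rfl fun m hm => hmain m hm x hx
    have htail : ‖∑ m ∈ Finset.Ico (n+1) (Mx+1), T m x‖ ≤ 6 := by
      have h5 : (0:ℝ) ≤ Real.sqrt 5 := Real.sqrt_nonneg _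
      have h52 : Real.sqrt 5 ^ 2 = 5 := Real.sq_sqrt (by norm_num)
      calc ‖∑ m ∈ Finset.Ico (n+1) (Mx+1), T m x‖
          ≤ ∑ m ∈ Finset.Ico (n+1) (Mx+1), ‖T m x‖ := norm_sum_le _ _
        _ ≤ ∑ m ∈ Finset.Ico (n+1) (Mx+1), Real.sqrt (4 * 2 ^ n + 1) * q ^ m :=
            Finset.sum_le_sum fun m _ => hT3 m x
        _ = ∑ k ∈ Finset.range (Mx + 1 - (n+1)),
              Real.sqrt (4 * 2 ^ n + 1) * q ^ (n + 1 + k) :=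
            Finset.sum_Ico_eq_sum_range _ _ _
        _ = (Real.sqrt (4 * 2 ^ n + 1) * q ^ n) * q *
              ∑ k ∈ Finset.range (Mx + 1 - (n+1)), q ^ k := by
            rw [Finset.mul_sum]
            apply Finset.sum_congr rfl
            intro k _
            rw [pow_add, pow_add, pow_one]
            ring
        _ ≤ Real.sqrt 5 * q * (1 - q)⁻¹ := by
            apply mul_le_mul
            · exact mul_le_mul_of_nonneg_right hsqrt5 hq0
            · calc ∑ k ∈ Finset.range (Mx + 1 - (n+1)), q ^ k
                  ≤ ∑' k : ℕ, q ^ k :=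
                    Summable.sum_le_tsum _ (fun k _ => by positivity)
                      (summable_geometric_of_lt_one hq0 hq1)
                _ = (1 - q)⁻¹ := tsum_geometric_of_lt_one hq0 hq1
            · exact Finset.sum_nonneg fun k _ => by positivity
            · positivity
        _ ≤ 6 := by
            rw [mul_inv_le_iff₀ (by linarith)]
            nlinarith [sq_nonneg (q - 0.708), sq_nonneg (Real.sqrt 5 - 2.237)]
    calc ‖S‖ - 6 ≤ ‖S‖ - ‖∑ m ∈ Finset.Ico (n+1) (Mx+1), T m x‖ := by linarith
      _ ≤ ‖S + ∑ m ∈ Finset.Ico (n+1) (Mx+1), T m x‖ := by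
          have := norm_add_le (S + ∑ m ∈ Finset.Ico (n+1) (Mx+1), T m x)
            (-(∑ m ∈ Finset.Ico (n+1) (Mx+1), T m x))
          simp only [add_neg_cancel_right, norm_neg] at this
          linarith
      _ = ‖conv g f x‖ := by rw [hsplit]
  -- summability of the convolution's square norms
  set B : ℤ := 2 ^ Mx + 2 * 2 ^ n with hBdef
  have hconv0 : ∀ x : ℤ, x ∉ Finset.Icc (-B) B → conv g f x = 0 := by
    intro x hx
    simp only [Finset.mem_Icc, not_and_or, not_le] at hx
    rw [hconv]
    apply Finset.sum_eq_zero
    intro m hm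
    simp only [Finset.mem_Icc] at hm
    have h2m : (2:ℤ) ^ m ≤ 2 ^ Mx := pow_le_pow_right₀ (by norm_num) hm.2
    apply Finset.sum_eq_zero
    intro y hy
    rw [hIdef] at hy
    simp only [Finset.mem_Icc] at hy
    have : K m (x - y) = 0 := by
      apply hKsupp
      rw [hBdef] at hx
      rcases hx with h | h
      · exact lt_abs.mpr (Or.inr (by linarith))
      · exact lt_abs.mpr (Or.inl (by linarith))
    rw [this, zero_mul]
  have hcsum : Summable (fun x : ℤ => ‖conv g f x‖ ^ 2) :=
    summable_of_ne_finset_zero (s := Finset.Icc (-B) B)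
      (fun x hx => by rw [hconv0 x hx]; simp)
  -- the ℓ² norm of f
  have hfnorm : (∑' x : ℤ, ‖f x‖ ^ 2) = (I.card : ℝ) := by
    rw [tsum_eq_sum (s := I) (fun x hx => by simp [hfdef, hx])]
    rw [Finset.sum_congr rfl (fun x hx => by simp [hfdef, hx] : ∀ x ∈ I, ‖f x‖ ^ 2 = 1)]
    simp
  -- cardinality of the inner interval
  have hcard2 : ((Finset.Icc (-(2 ^ n) : ℤ) (2 ^ n)).card : ℝ) = 2 * 2 ^ n + 1 := by
    rw [Int.card_Icc, show ((2:ℤ) ^ n + 1 - -(2 ^ n)) = 2 * 2 ^ n + 1 by ring]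
    have h4 : (0:ℤ) ≤ 2 * 2 ^ n + 1 := by positivity
    rw [show (((2 * (2:ℤ) ^ n + 1).toNat : ℕ) : ℝ) = ((2 * (2:ℤ) ^ n + 1 : ℤ) : ℝ) by
      rw [← Int.cast_natCast, Int.toNat_of_nonneg h4]]
    push_cast
    ring
  -- assemble the contradiction
  have hD : (5:ℝ) < ‖S‖ - 6 := by linarith
  have hD0 : (0:ℝ) ≤ ‖S‖ - 6 := by linarith
  have hlow : ((Finset.Icc (-(2 ^ n) : ℤ) (2 ^ n)).card : ℝ) * (‖S‖ - 6) ^ 2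
      ≤ ∑ x ∈ Finset.Icc (-(2 ^ n) : ℤ) (2 ^ n), ‖conv g f x‖ ^ 2 := by
    rw [← nsmul_eq_mul]
    exact Finset.card_nsmul_le_sum _ _ _
      (fun x hx => pow_le_pow_left₀ hD0 (hkey x hx) 2)
  have hup : ∑ x ∈ Finset.Icc (-(2 ^ n) : ℤ) (2 ^ n), ‖conv g f x‖ ^ 2
      ≤ 4 * 2 ^ n + 1 := by
    calc ∑ x ∈ Finset.Icc (-(2 ^ n) : ℤ) (2 ^ n), ‖conv g f x‖ ^ 2
        ≤ ∑' x : ℤ, ‖conv g f x‖ ^ 2 :=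
          Summable.sum_le_tsum _ (fun x _ => by positivity) hcsum
      _ ≤ ∑' x : ℤ, ‖f x‖ ^ 2 := hOp f hffin
      _ = (4:ℝ) * 2 ^ n + 1 := by rw [hfnorm, hcard]
  rw [hcard2] at hlow
  have h2n1 : (1:ℝ) ≤ 2 ^ n := one_le_pow₀ (by norm_num)
  have h25 : (25:ℝ) ≤ (‖S‖ - 6) ^ 2 := by nlinarith
  have hc0 : (0:ℝ) ≤ 2 * 2 ^ n + 1 := by positivity
  nlinarith [mul_le_mul_of_nonneg_left h25 hc0, hlow, hup]
end

section
/- Suppose K and L are convolution kernels on ℤ, each a sum K = ∑_{s dyadic, s ≥ 𝒥} K_s and L = ∑_{s dyadic, s ≥ 𝒥} L_s of Calderón–Zygmund building blocks of scale s (each K_s, L_s supported in [-s,s], with vanishing sum, ∑|K_s|² ≤ D_K²/s, ∑|L_s|² ≤ D_L²/s, and the Hölder condition ∑_x |K_s(x+h) - K_s(x)|² ≤ (D_K²/s)(|h|/s)^ω, similarly for L). Then K * L is also a sum of CZ building blocks of scales ≥ 𝒥, and its CZ norm satisfies ‖K * L‖_CZ ≤ C ‖K‖_CZ ‖L‖_CZ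 with C independent of 𝒥. -/
/-- A Calderón–Zygmund building block of scale `s` with constant `D` and Hölder
exponent `ω`: vanishing sum, support in `[-s, s]`, ℓ² bound and Hölder condition. -/
def IsCZBlock (ω : ℝ) (s : ℕ) (D : ℝ) (K : ℤ → ℂ) : Prop :=
  (∑' x : ℤ, K x) = 0 ∧
  (∀ x : ℤ, (s : ℤ) < |x| → K x = 0) ∧
  (∑' x : ℤ, ‖K x‖ ^ 2) ≤ D ^ 2 / s ∧
  ∀ h : ℤ, (∑' x : ℤ, ‖K (x + h) - K x‖ ^ 2) ≤ D ^ 2 / s * (((|h| : ℤ) : ℝ) / s) ^ ω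

open Finset Complex Real

noncomputable section

namespace CZaux

/--函数 supported in `[-N, N]`. -/
def FS {E : Type*} [Zero E] (f : ℤ → E) (N : ℕ) : Prop := ∀ x : ℤ, (N : ℤ) < |x| → f x = 0

abbrev Ic (N : ℕ) : Finset ℤ := Finset.Icc (-(N : ℤ)) N

lemma not_mem_Ic {N : ℕ} {x : ℤ} : x ∉ Ic N ↔ (N : ℤ) < |x| := by
  rw [Ic, Finset.mem_Icc, ← abs_le, not_le]

lemma FS.eq_zero' {E : Type*} [Zero E] {f : ℤ → E} {N : ℕ} (hf : FS f N) :
    ∀ x ∉ Ic N, f x = 0 := fun x hx => hf x (not_mem_Ic.1 hx)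

lemma FS.summable {E : Type*} [AddCommGroup E] [TopologicalSpace E] [IsTopologicalAddGroup E]
    {f : ℤ → E} {N : ℕ} (hf : FS f N) : Summable f :=
  summable_of_ne_finset_zero hf.eq_zero'

lemma FS.tsum_eq {E : Type*} [AddCommMonoid E] [TopologicalSpace E] [T2Space E]
    {f : ℤ → E} {N : ℕ} (hf : FS f N) : ∑' x : ℤ, f x = ∑ x ∈ Ic N, f x :=
  tsum_eq_sum hf.eq_zero'

lemma FS.imp {E F : Type*} [Zero E] [Zero F] {f : ℤ → E} {g : ℤ → F} {N : ℕ}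
    (hf : FS f N) (h : ∀ x, f x = 0 → g x = 0) : FS g N := fun x hx => h x (hf x hx)

lemma FS.mono {E : Type*} [Zero E] {f : ℤ → E} {N M : ℕ} (hf : FS f N) (hNM : N ≤ M) :
    FS f M := fun x hx => hf x (lt_of_le_of_lt (by exact_mod_cast hNM) hx)

/-- `e^{it}`. -/
def ee (t : ℝ) : ℂ := Complex.exp (t * Complex.I)

@[simp] lemma ee_zero : ee 0 = 1 := by simp [ee]

@[simp] lemma norm_ee (t : ℝ) : ‖ee t‖ = 1 := by
  simp [ee, Complex.norm_exp]

lemma ee_add (s t : ℝ) : ee (s + t) = ee s * ee t := by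
  simp [ee, ← Complex.exp_add]; ring_nf

lemma conj_ee (t : ℝ) : (starRingEnd ℂ) (ee t) = ee (-t) := by
  rw [ee, ← Complex.exp_conj]
  simp [ee]

lemma ee_int_mul (y : ℤ) : ee (2 * π * y) = 1 := by
  rw [ee]
  have : ((2 * π * (y : ℝ) : ℝ) : ℂ) * Complex.I = (y : ℂ) * (2 * (π : ℂ) * Complex.I) := by
    push_cast; ring
  rw [this, Complex.exp_int_mul_two_pi_mul_I]

lemma ee_re (t : ℝ) : (ee t).re = Real.cos t := by
  simp [ee, Complex.exp_ofReal_mul_I_re]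

lemma ee_im (t : ℝ) : (ee t).im = Real.sin t := by
  simp [ee, Complex.exp_ofReal_mul_I_im]

lemma normsq_ee_sub_one (t : ℝ) : ‖ee t - 1‖ ^ 2 = 2 - 2 * Real.cos t := by
  rw [Complex.sq_norm, Complex.normSq_apply]
  simp only [Complex.sub_re, Complex.sub_im, ee_re, ee_im, Complex.one_re, Complex.one_im]
  have := Real.sin_sq_add_cos_sq t
  nlinarith [this]

lemma norm_ee_sub_one_le (t : ℝ) : ‖ee t - 1‖ ≤ |t| := by
  have h1 : ‖ee t - 1‖ ^ 2 ≤ |t| ^ 2 := by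
    rw [normsq_ee_sub_one]
    have := Real.one_sub_sq_div_two_le_cos (x := t)
    rw [_root_.sq_abs]; nlinarith
  exact (pow_le_pow_iff_left₀ (norm_nonneg _) (abs_nonneg _) two_ne_zero).1 h1

lemma two_le_normsq_ee_sub_one {t : ℝ} (h : Real.cos t ≤ 0) : 2 ≤ ‖ee t - 1‖ ^ 2 := by
  rw [normsq_ee_sub_one]; linarith

/-- Orthogonality of roots of unity. -/
lemma sum_ee (q : ℕ) (hq : 0 < q) (k : ℤ) :
    ∑ j ∈ Finset.range q, ee (2 * π * k * j / q) = if (q : ℤ) ∣ k then (q : ℂ) else 0 := by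
  split_ifs with hdvd
  · obtain ⟨c, hk⟩ := hdvd
    have hq' : (q : ℝ) ≠ 0 := by positivity
    have : ∀ j ∈ Finset.range q, ee (2 * π * k * j / q) = 1 := by
      intro j hj
      have harg : 2 * π * (k : ℝ) * j / q = 2 * π * ((c * j : ℤ) : ℝ) := by
        rw [hk]; push_cast; field_simp
      rw [harg, ee_int_mul]
    rw [Finset.sum_congr rfl this]; simp
  · -- geometric sum
    have hq' : (q : ℝ) ≠ 0 := by positivity
    set x : ℂ := ee (2 * π * k / q) with hx
    have hterm : ∀ j ∈ Finset.range q, ee (2 * π * k * j / q) = x ^ j := by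
      intro j hj
      rw [hx, ee, ee, ← Complex.exp_nat_mul]
      congr 1
      push_cast; field_simp
    rw [Finset.sum_congr rfl hterm]
    have hxne : x ≠ 1 := by
      intro hx1
      rw [hx, ee] at hx1
      obtain ⟨n, hn⟩ := Complex.exp_eq_one_iff.1 hx1
      have hn' : ((2 * π * (k : ℝ) / q : ℝ) : ℂ) * Complex.I = (((n : ℝ) * (2 * π) : ℝ) : ℂ) * Complex.I := by
        rw [hn]; push_cast; ring
      have hI := mul_right_cancel₀ Complex.I_ne_zero hn'
      have hre : (2 * π * (k : ℝ) / q : ℝ) = (n : ℝ) * (2 * π) := by exact_mod_cast hI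
      have h2π : (2 * π : ℝ) ≠ 0 := by positivity
      have hre' : (2 * π : ℝ) * ((k : ℝ) / q) = (2 * π : ℝ) * (n : ℝ) := by ring_nf; ring_nf at hre; linarith
      have hdivq : (k : ℝ) / q = (n : ℝ) := mul_left_cancel₀ h2π hre'
      have hkr : (k : ℝ) = (n : ℝ) * q := by
        field_simp at hdivq; linarith
      have hkz : k = n * q := by exact_mod_cast hkr
      exact hdvd ⟨n, by rw [hkz]; ring⟩
    rw [geom_sum_eq hxne]
    have hxq : x ^ q = 1 := by
      rw [hx, ee, ← Complex.exp_nat_mul]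
      have : (q : ℂ) * (((2 * π * (k : ℝ) / q : ℝ)) * Complex.I) = (k : ℂ) * (2 * π * Complex.I) := by
        push_cast
        have : (q : ℂ) ≠ 0 := by exact_mod_cast (Nat.cast_ne_zero (R := ℂ)).2 hq.ne'
        field_simp
      rw [this, Complex.exp_int_mul_two_pi_mul_I]
    rw [hxq]; simp

end CZaux


namespace CZaux

/-- Fourier transform at angle θ. -/
noncomputable def ftheta (f : ℤ → ℂ) (θ : ℝ) : ℂ := ∑' y : ℤ, f y * ee (θ * y)

noncomputable def dft (q : ℕ) (f : ℤ → ℂ) (j : ℕ) : ℂ := ftheta f (-(2 * π * j / q))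

lemma FS.mul_ee {f : ℤ → ℂ} {N : ℕ} (hf : FS f N) (θ : ℝ) :
    FS (fun y => f y * ee (θ * y)) N :=
  hf.imp (fun x hx => by simp [hx])

lemma ftheta_eq_sum {f : ℤ → ℂ} {N : ℕ} (hf : FS f N) (θ : ℝ) :
    ftheta f θ = ∑ y ∈ Ic N, f y * ee (θ * y) :=
  (hf.mul_ee θ).tsum_eq

lemma ftheta_add_two_pi (f : ℤ → ℂ) (θ : ℝ) : ftheta f (θ + 2 * π) = ftheta f θ := by
  refine tsum_congr fun y => ?_
  have harg : (θ + 2 * π) * (y : ℝ) = θ * y + 2 * π * y := by ring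
  rw [harg, ee_add, ee_int_mul, mul_one]

lemma ftheta_zero (f : ℤ → ℂ) : ftheta f 0 = ∑' y : ℤ, f y :=
  tsum_congr fun y => by simp

/-- FT of convolution. -/
lemma ftheta_conv {f g : ℤ → ℂ} {N M : ℕ} (hf : FS f N) (hg : FS g M) (θ : ℝ) :
    ftheta (conv f g) θ = ftheta f θ * ftheta g θ := by
  set u : ℤ → ℤ → ℂ := fun y x => f (x - y) * g y * ee (θ * x) with hu
  have hvanish : ∀ y x, x ∉ Ic (N + M) → u y x = 0 := by
    intro y x hx
    rw [not_mem_Ic] at hx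
    by_cases hyM : (M : ℤ) < |y|
    · simp [hu, hg y hyM]
    · have hy : |y| ≤ (M : ℤ) := not_lt.1 hyM
      have hfxy : f (x - y) = 0 := by
        refine hf _ ?_
        have h1 := abs_sub_abs_le_abs_sub x y
        push_cast at hx
        linarith
      simp [hu, hfxy]
  have hsum_u : ∀ y, Summable (u y) := fun y =>
    summable_of_ne_finset_zero (s := Ic (N + M)) (fun x hx => hvanish y x hx)
  have hsum_u' : ∀ x, Summable fun y => u y x := by
    intro x
    refine summable_of_ne_finset_zero (s := Ic M) (fun y hy => ?_)
    rw [not_mem_Ic] at hy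
    simp [hu, hg y hy]
  have hsum_unc : Summable (Function.uncurry u) := by
    refine summable_of_ne_finset_zero (s := (Ic M) ×ˢ (Ic (N + M))) (fun p hp => ?_)
    rw [Finset.mem_product, not_and_or] at hp
    rcases hp with hp | hp
    · rw [not_mem_Ic] at hp
      simp [Function.uncurry, hu, hg p.1 hp]
    · exact hvanish p.1 p.2 hp
  have step1 : ftheta (conv f g) θ = ∑' x : ℤ, ∑' y : ℤ, u y x := by
    refine tsum_congr fun x => ?_
    show (∑' y : ℤ, f (x - y) * g y) * ee (θ * x) = ∑' y : ℤ, u y x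
    rw [← tsum_mul_right]
  have step2 : ∑' x : ℤ, ∑' y : ℤ, u y x = ∑' y : ℤ, ∑' x : ℤ, u y x :=
    Summable.tsum_comm' hsum_unc hsum_u hsum_u'
  have step3 : ∀ y : ℤ, ∑' x : ℤ, u y x = (g y * ee (θ * y)) * ftheta f θ := by
    intro y
    calc ∑' x : ℤ, u y x = ∑' z : ℤ, u y (z + y) := ((Equiv.addRight y).tsum_eq (u y)).symm
    _ = ∑' z : ℤ, (f z * ee (θ * z)) * (g y * ee (θ * y)) := by
        refine tsum_congr fun z => ?_
        show f (z + y - y) * g y * ee (θ * ((z + y : ℤ) : ℝ)) = _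
        have h1 : z + y - y = z := add_sub_cancel_right z y
        have h2 : θ * ((z + y : ℤ) : ℝ) = θ * z + θ * y := by push_cast; ring
        rw [h1, h2, ee_add]; ring
    _ = (∑' z : ℤ, f z * ee (θ * z)) * (g y * ee (θ * y)) := tsum_mul_right
    _ = (g y * ee (θ * y)) * ftheta f θ := by rw [ftheta]; ring
  calc ftheta (conv f g) θ = ∑' y : ℤ, ∑' x : ℤ, u y x := by rw [step1, step2]
  _ = ∑' y : ℤ, (g y * ee (θ * y)) * ftheta f θ := tsum_congr step3
  _ = (∑' y : ℤ, g y * ee (θ * y)) * ftheta f θ := tsum_mul_right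
  _ = ftheta f θ * ftheta g θ := mul_comm _ _

lemma conv_eq_sum {g : ℤ → ℂ} {M : ℕ} (hg : FS g M) (f : ℤ → ℂ) (x : ℤ) :
    conv f g x = ∑ y ∈ Ic M, f (x - y) * g y :=
  tsum_eq_sum (fun y hy => by rw [hg y (not_mem_Ic.1 hy), mul_zero])

lemma conv_fs {f g : ℤ → ℂ} {N M : ℕ} (hf : FS f N) (hg : FS g M) :
    FS (conv f g) (N + M) := by
  intro x hx
  show (∑' y : ℤ, f (x - y) * g y) = 0
  have hz : ∀ y : ℤ, f (x - y) * g y = 0 := by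
    intro y
    by_cases hyM : (M : ℤ) < |y|
    · rw [hg y hyM, mul_zero]
    · have h1 := abs_sub_abs_le_abs_sub x y
      push_cast at hx
      rw [hf (x - y) (by have := not_lt.1 hyM; linarith), zero_mul]
  rw [tsum_congr hz]
  exact tsum_zero

lemma conv_comm (f g : ℤ → ℂ) (x : ℤ) : conv f g x = conv g f x := by
  show (∑' y : ℤ, f (x - y) * g y) = ∑' y : ℤ, g (x - y) * f y
  calc (∑' y : ℤ, f (x - y) * g y) = ∑' z : ℤ, f (x - (x - z)) * g (x - z) :=
        ((Equiv.subLeft x).tsum_eq (fun y => f (x - y) * g y)).symm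
  _ = ∑' z : ℤ, g (x - z) * f z := by
      refine tsum_congr fun z => ?_
      rw [sub_sub_cancel]; ring

lemma conv_delta {g : ℤ → ℂ} {M : ℕ} (hg : FS g M) (f : ℤ → ℂ) (h x : ℤ) :
    conv f g (x + h) - conv f g x = conv (fun t => f (t + h) - f t) g x := by
  have hs1 : Summable fun y => f (x + h - y) * g y :=
    summable_of_ne_finset_zero (s := Ic M)
      (fun y hy => by rw [hg y (not_mem_Ic.1 hy), mul_zero])
  have hs2 : Summable fun y => f (x - y) * g y :=
    summable_of_ne_finset_zero (s := Ic M)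
      (fun y hy => by rw [hg y (not_mem_Ic.1 hy), mul_zero])
  show (∑' y : ℤ, f (x + h - y) * g y) - (∑' y : ℤ, f (x - y) * g y)
      = ∑' y : ℤ, (f (x - y + h) - f (x - y)) * g y
  rw [← Summable.tsum_sub hs1 hs2]
  refine tsum_congr fun y => ?_
  have : x - y + h = x + h - y := by ring
  rw [this, sub_mul]

lemma conv_sum_right (f : ℤ → ℂ) {s : Finset ℕ} {g : ℕ → ℤ → ℂ} {Mg : ℕ → ℕ}
    (hgs : ∀ n ∈ s, FS (g n) (Mg n)) (x : ℤ) :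
    conv f (fun y => ∑ n ∈ s, g n y) x = ∑ n ∈ s, conv f (g n) x := by
  show (∑' y : ℤ, f (x - y) * ∑ n ∈ s, g n y) = ∑ n ∈ s, ∑' y : ℤ, f (x - y) * g n y
  rw [← Summable.tsum_finsetSum (fun n hn => summable_of_ne_finset_zero (s := Ic (Mg n))
      (fun y hy => by rw [hgs n hn y (not_mem_Ic.1 hy), mul_zero]))]
  exact tsum_congr fun y => Finset.mul_sum _ _ _

lemma conv_zero_left (g : ℤ → ℂ) (x : ℤ) : conv (fun _ => 0) g x = 0 := by
  simp [conv]

lemma norm_sq_eq_re_mul_conj (z : ℂ) : (‖z‖ : ℝ) ^ 2 = (z * (starRingEnd ℂ) z).re := by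
  rw [Complex.mul_conj, Complex.ofReal_re, Complex.normSq_eq_norm_sq]

/-- Discrete Parseval identity. -/
theorem parseval {f : ℤ → ℂ} {N q : ℕ} (hf : FS f N) (hq : 2 * N < q) :
    (q : ℝ) * ∑' y : ℤ, ‖f y‖ ^ 2 = ∑ j ∈ Finset.range q, ‖dft q f j‖ ^ 2 := by
  have hq0 : 0 < q := lt_of_le_of_lt (Nat.zero_le _) hq
  have key : ∑ j ∈ Finset.range q, (dft q f j * (starRingEnd ℂ) (dft q f j))
      = (q : ℂ) * ∑ y ∈ Ic N, f y * (starRingEnd ℂ) (f y) := by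
    have expand : ∀ j ∈ Finset.range q,
        dft q f j * (starRingEnd ℂ) (dft q f j)
          = ∑ y ∈ Ic N, ∑ y' ∈ Ic N,
              (f y * (starRingEnd ℂ) (f y')) * ee (2 * π * ((y' - y : ℤ) : ℝ) * j / q) := by
      intro j _
      rw [dft, ftheta_eq_sum hf, map_sum, Finset.sum_mul_sum]
      refine Finset.sum_congr rfl fun y _ => Finset.sum_congr rfl fun y' _ => ?_
      rw [map_mul, conj_ee]
      have : ee (-(2 * π * j / q) * y) * ee (-(-(2 * π * j / q) * y'))
          = ee (2 * π * ((y' - y : ℤ) : ℝ) * j / q) := by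
        rw [← ee_add]
        congr 1
        push_cast; ring
      calc f y * ee (-(2 * π * j / q) * y) * ((starRingEnd ℂ) (f y') * ee (-(-(2 * π * j / q) * y')))
          = (f y * (starRingEnd ℂ) (f y')) * (ee (-(2 * π * j / q) * y) * ee (-(-(2 * π * j / q) * y'))) := by ring
      _ = _ := by rw [this]
    rw [Finset.sum_congr rfl expand, Finset.sum_comm]
    have swap2 : ∀ y ∈ Ic N, ∑ j ∈ Finset.range q, ∑ y' ∈ Ic N,
        (f y * (starRingEnd ℂ) (f y')) * ee (2 * π * ((y' - y : ℤ) : ℝ) * j / q)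
        = (q : ℂ) * (f y * (starRingEnd ℂ) (f y)) := by
      intro y hy
      rw [Finset.sum_comm]
      have inner : ∀ y' ∈ Ic N, ∑ j ∈ Finset.range q,
          (f y * (starRingEnd ℂ) (f y')) * ee (2 * π * ((y' - y : ℤ) : ℝ) * j / q)
          = (f y * (starRingEnd ℂ) (f y')) * (if (q : ℤ) ∣ (y' - y) then (q : ℂ) else 0) := by
        intro y' _
        rw [← Finset.mul_sum, sum_ee q hq0 (y' - y)]
      rw [Finset.sum_congr rfl inner]
      rw [Finset.sum_eq_single_of_mem y hy]
      · rw [if_pos (by simp)]; ring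
      · intro y' hy' hne
        rw [if_neg, mul_zero]
        intro hdvd
        have hyN : |y| ≤ (N : ℤ) := by
          rcases Finset.mem_Icc.1 hy with ⟨h1, h2⟩; rw [abs_le]; exact ⟨h1, h2⟩
        have hy'N : |y'| ≤ (N : ℤ) := by
          rcases Finset.mem_Icc.1 hy' with ⟨h1, h2⟩; rw [abs_le]; exact ⟨h1, h2⟩
        have hne0 : y' - y ≠ 0 := sub_ne_zero.2 hne
        have hle : (q : ℤ) ≤ |y' - y| :=
          Int.le_of_dvd (abs_pos.2 hne0) ((dvd_abs _ _).2 hdvd)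
        have habs : |y' - y| ≤ 2 * N := by
          have := abs_sub y' y
          calc |y' - y| ≤ |y'| + |y| := abs_sub _ _
          _ ≤ 2 * N := by omega
        have : (q : ℤ) < (q : ℤ) := by
          calc (q : ℤ) ≤ |y' - y| := hle
          _ ≤ 2 * N := habs
          _ < q := by exact_mod_cast hq
        exact absurd this (lt_irrefl _)
    rw [Finset.sum_congr rfl swap2, ← Finset.mul_sum]
  -- take real parts
  have lhs_eq : ∑ j ∈ Finset.range q, ‖dft q f j‖ ^ 2
      = (∑ j ∈ Finset.range q, (dft q f j * (starRingEnd ℂ) (dft q f j))).re := by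
    rw [Complex.re_sum]
    exact Finset.sum_congr rfl fun j _ => norm_sq_eq_re_mul_conj _
  have rhs_eq : ((q : ℂ) * ∑ y ∈ Ic N, f y * (starRingEnd ℂ) (f y)).re
      = (q : ℝ) * ∑ y ∈ Ic N, ‖f y‖ ^ 2 := by
    have : (∑ y ∈ Ic N, f y * (starRingEnd ℂ) (f y)) = ((∑ y ∈ Ic N, ‖f y‖ ^ 2 : ℝ) : ℂ) := by
      rw [Complex.ofReal_sum]
      exact Finset.sum_congr rfl fun y _ => by
        rw [Complex.mul_conj]
        simp [Complex.normSq_eq_norm_sq]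
    rw [this, ← Complex.ofReal_natCast, ← Complex.ofReal_mul, Complex.ofReal_re]
  have hfsq : (∑' y : ℤ, ‖f y‖ ^ 2) = ∑ y ∈ Ic N, ‖f y‖ ^ 2 :=
    (hf.imp (fun x hx => by rw [hx]; simp)).tsum_eq
  rw [hfsq, lhs_eq, key, rhs_eq]

end CZaux

namespace CZaux


noncomputable def c3 (ω : ℝ) : ℝ := 15 * (6 : ℝ) ^ (ω / 2)
noncomputable def SΩ (ω : ℝ) : ℝ := 2 + (1 - (2 : ℝ) ^ (-(ω / 2)))⁻¹
noncomputable def C1 (ω : ℝ) : ℝ := c3 ω * SΩ ω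

lemma c3_pos (ω : ℝ) : 0 < c3 ω := by
  have := Real.rpow_pos_of_pos (show (0:ℝ) < 6 by norm_num) (ω / 2)
  unfold c3; positivity

lemma x2_lt_one {ω : ℝ} (hω : 0 < ω) : (2 : ℝ) ^ (-(ω / 2)) < 1 :=
  Real.rpow_lt_one_of_one_lt_of_neg (by norm_num) (by linarith)

lemma x2_pos (ω : ℝ) : 0 < (2 : ℝ) ^ (-(ω / 2)) :=
  Real.rpow_pos_of_pos (by norm_num) _

lemma SΩ_pos {ω : ℝ} (hω : 0 < ω) : 0 < SΩ ω := by
  have h1 := x2_lt_one hω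
  have h2 := x2_pos ω
  have : 0 < (1 - (2 : ℝ) ^ (-(ω / 2)))⁻¹ := by
    apply inv_pos.2; linarith
  unfold SΩ; linarith

lemma C1_pos {ω : ℝ} (hω : 0 < ω) : 0 < C1 ω := mul_pos (c3_pos ω) (SΩ_pos hω)

section Blocks

variable {ω : ℝ} {s : ℕ} {D : ℝ} {K : ℤ → ℂ}

lemma block_fs (hB : IsCZBlock ω s D K) : FS K s := hB.2.1

lemma block_l2_sum (hB : IsCZBlock ω s D K) :
    ∑ y ∈ Ic s, ‖K y‖ ^ 2 ≤ D ^ 2 / s := by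
  rw [← ((block_fs hB).imp (fun x hx => by rw [hx]; simp)).tsum_eq]
  exact hB.2.2.1

lemma card_Ic (N : ℕ) : (Ic N).card = 2 * N + 1 := by
  rw [Ic, Int.card_Icc]; omega

/-- Mean-zero + Cauchy–Schwarz low-frequency bound. -/
lemma block_E1 (hB : IsCZBlock ω s D K) (hD : 0 ≤ D) (hs : 1 ≤ s) (θ : ℝ) :
    ‖ftheta K θ‖ ≤ 2 * D * s * |θ| := by
  have hfs := block_fs hB
  have hsum1 : Summable fun y => K y * ee (θ * y) := (hfs.mul_ee θ).summable
  have hsum2 : Summable K := hfs.summable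
  have hrepr : ftheta K θ = ∑' y : ℤ, K y * (ee (θ * y) - 1) := by
    have h0 : ftheta K θ = (∑' y : ℤ, K y * ee (θ * y)) - ∑' y : ℤ, K y := by
      rw [hB.1, sub_zero]; rfl
    rw [h0, ← Summable.tsum_sub hsum1 hsum2]
    exact tsum_congr fun y => by ring
  have hfs' : FS (fun y => K y * (ee (θ * y) - 1)) s :=
    hfs.imp (fun x hx => by rw [hx, zero_mul])
  have h1 : ‖ftheta K θ‖ ≤ ∑' y : ℤ, ‖K y * (ee (θ * y) - 1)‖ := by
    rw [hrepr]
    exact norm_tsum_le_tsum_norm (hfs'.imp (fun x hx => by rw [hx, norm_zero])).summable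
  have h2 : (∑' y : ℤ, ‖K y * (ee (θ * y) - 1)‖)
      = ∑ y ∈ Ic s, ‖K y * (ee (θ * y) - 1)‖ :=
    (hfs'.imp (fun x hx => by rw [hx, norm_zero])).tsum_eq
  set B := ∑ y ∈ Ic s, ‖K y‖ * |(y : ℝ)| with hBdef
  have h3 : ∑ y ∈ Ic s, ‖K y * (ee (θ * y) - 1)‖ ≤ |θ| * B := by
    rw [hBdef, Finset.mul_sum]
    refine Finset.sum_le_sum fun y _ => ?_
    rw [norm_mul]
    have : ‖ee (θ * y) - 1‖ ≤ |θ| * |(y : ℝ)| := by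
      have := norm_ee_sub_one_le (θ * y)
      rwa [abs_mul] at this
    calc ‖K y‖ * ‖ee (θ * y) - 1‖ ≤ ‖K y‖ * (|θ| * |(y : ℝ)|) := by
          exact mul_le_mul_of_nonneg_left this (norm_nonneg _)
    _ = |θ| * (‖K y‖ * |(y : ℝ)|) := by ring
  have hBnonneg : 0 ≤ B := Finset.sum_nonneg fun y _ => by positivity
  have hB2 : B ^ 2 ≤ 3 * D ^ 2 * s ^ 2 := by
    have hcs := Finset.sum_mul_sq_le_sq_mul_sq (Ic s) (fun y => ‖K y‖) (fun y => |(y : ℝ)|)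
    have hsq : ∑ y ∈ Ic s, ‖K y‖ ^ 2 ≤ D ^ 2 / s := block_l2_sum hB
    have hy2 : ∑ y ∈ Ic s, |(y : ℝ)| ^ 2 ≤ 3 * (s : ℝ) ^ 3 := by
      have hbound : ∀ y ∈ Ic s, |(y : ℝ)| ^ 2 ≤ (s : ℝ) ^ 2 := by
        intro y hy
        rcases Finset.mem_Icc.1 hy with ⟨ha, hb⟩
        have : |(y : ℝ)| ≤ (s : ℝ) := by
          rw [abs_le]; constructor <;> [exact_mod_cast ha; exact_mod_cast hb]
        exact pow_le_pow_left₀ (abs_nonneg _) this 2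
      calc ∑ y ∈ Ic s, |(y : ℝ)| ^ 2 ≤ (Ic s).card • (s : ℝ) ^ 2 :=
            Finset.sum_le_card_nsmul _ _ _ hbound
      _ = ((2 * s + 1 : ℕ) : ℝ) * (s : ℝ) ^ 2 := by rw [card_Ic]; rw [nsmul_eq_mul]
      _ ≤ 3 * (s : ℝ) ^ 3 := by
          have hs' : (1 : ℝ) ≤ (s : ℝ) := by exact_mod_cast hs
          push_cast; nlinarith
    have hs0 : (0 : ℝ) < s := by positivity
    calc B ^ 2 ≤ (∑ y ∈ Ic s, ‖K y‖ ^ 2) * ∑ y ∈ Ic s, |(y : ℝ)| ^ 2 := hcs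
    _ ≤ (D ^ 2 / s) * (3 * (s : ℝ) ^ 3) := by
        apply mul_le_mul hsq hy2 (Finset.sum_nonneg fun y _ => by positivity)
        positivity
    _ = 3 * D ^ 2 * (s : ℝ) ^ 2 := by field_simp
  have hBle : B ≤ 2 * D * s := by
    have h2Ds : (0 : ℝ) ≤ 2 * D * s := by positivity
    refine (pow_le_pow_iff_left₀ hBnonneg h2Ds two_ne_zero).1 ?_
    calc B ^ 2 ≤ 3 * D ^ 2 * s ^ 2 := hB2
    _ ≤ (2 * D * s) ^ 2 := by nlinarith [sq_nonneg (D * s)]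
  calc ‖ftheta K θ‖ ≤ ∑' y : ℤ, ‖K y * (ee (θ * y) - 1)‖ := h1
  _ = ∑ y ∈ Ic s, ‖K y * (ee (θ * y) - 1)‖ := h2
  _ ≤ |θ| * B := h3
  _ ≤ |θ| * (2 * D * s) := mul_le_mul_of_nonneg_left hBle (abs_nonneg _)
  _ = 2 * D * s * |θ| := by ring

/-- Difference identity for the Fourier transform. -/
lemma ftheta_diff {f : ℤ → ℂ} {N : ℕ} (hf : FS f N) (h : ℕ) (θ : ℝ) :
    ftheta (fun y => f (y + h) - f y) θ = (ee (-(θ * h)) - 1) * ftheta f θ := by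
  have hs1 : Summable fun y : ℤ => f (y + h) * ee (θ * y) := by
    refine summable_of_ne_finset_zero (s := Ic (N + h)) (fun y hy => ?_)
    rw [not_mem_Ic] at hy
    have : f (y + (h : ℤ)) = 0 := by
      refine hf _ ?_
      have h1 : |y| ≤ |y + (h : ℤ)| + (h : ℤ) := by
        have := abs_add_le (y + (h : ℤ)) (-(h : ℤ))
        simp only [add_neg_cancel_right, abs_neg] at this
        have h2 : |(h : ℤ)| = (h : ℤ) := abs_of_nonneg (by positivity)
        omega
      push_cast at hy ⊢
      omega
    rw [this, zero_mul]
  have hs2 : Summable fun y : ℤ => f y * ee (θ * y) := (hf.mul_ee θ).summable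
  have step : (∑' y : ℤ, f (y + h) * ee (θ * y)) = ee (-(θ * h)) * ftheta f θ := by
    calc (∑' y : ℤ, f (y + h) * ee (θ * y))
        = ∑' z : ℤ, f (z - h + h) * ee (θ * ((z - h : ℤ) : ℝ)) :=
          ((Equiv.subRight (h : ℤ)).tsum_eq (fun y => f (y + h) * ee (θ * y))).symm
    _ = ∑' z : ℤ, (f z * ee (θ * z)) * ee (-(θ * h)) := by
        refine tsum_congr fun z => ?_
        have h1 : z - (h : ℤ) + h = z := by ring
        have h2 : θ * ((z - h : ℤ) : ℝ) = θ * z + -(θ * h) := by push_cast; ring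
        rw [h1, h2, ee_add]; ring
    _ = (∑' z : ℤ, f z * ee (θ * z)) * ee (-(θ * h)) := tsum_mul_right
    _ = ee (-(θ * h)) * ftheta f θ := mul_comm _ _
  calc ftheta (fun y => f (y + h) - f y) θ
      = ∑' y : ℤ, (f (y + h) * ee (θ * y) - f y * ee (θ * y)) :=
        tsum_congr fun y => by ring
  _ = (∑' y : ℤ, f (y + h) * ee (θ * y)) - ∑' y : ℤ, f y * ee (θ * y) := Summable.tsum_sub hs1 hs2
  _ = (ee (-(θ * h)) - 1) * ftheta f θ := by rw [step, ftheta]; ring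

end Blocks

end CZaux

namespace CZaux

section Blocks2

variable {ω : ℝ} {s : ℕ} {D : ℝ} {K : ℤ → ℂ}

lemma one_le_six_rpow {a : ℝ} (ha : 0 ≤ a) : (1 : ℝ) ≤ (6 : ℝ) ^ a := by
  calc (1 : ℝ) = (6 : ℝ) ^ (0 : ℝ) := (Real.rpow_zero 6).symm
  _ ≤ (6 : ℝ) ^ a := Real.rpow_le_rpow_of_exponent_le (by norm_num) ha

set_option maxHeartbeats 1000000 in
/-- High-frequency bound via the Hölder condition. -/
lemma block_E2 (hω : 0 < ω) (hB : IsCZBlock ω s D K) (hD : 0 ≤ D) (hs : 1 ≤ s)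
    {θ : ℝ} (hθ : |θ| ≤ π) (ht : 6 ≤ (s : ℝ) * |θ|) :
    ‖ftheta K θ‖ ^ 2 ≤ 4 * D ^ 2 * (6 / ((s : ℝ) * |θ|)) ^ ω := by
  have hs0 : (0 : ℝ) < s := by positivity
  have habs : (0 : ℝ) ≤ |θ| := abs_nonneg θ
  have hθpos : 0 < |θ| := by
    rcases lt_or_eq_of_le habs with h | h
    · exact h
    · rw [← h, mul_zero] at ht; norm_num at ht
  have hπ := Real.pi_pos
  have hπ4 : π < 4 := by linarith [Real.pi_lt_d2]
  set h : ℕ := ⌈(π / 2) / |θ|⌉₊ with hdef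
  have hh1 : (π / 2) / |θ| ≤ (h : ℝ) := Nat.le_ceil _
  have hh2 : (h : ℝ) < (π / 2) / |θ| + 1 := Nat.ceil_lt_add_one (by positivity)
  have hdiv : ((π / 2) / |θ|) * |θ| = π / 2 := div_mul_cancel₀ _ (ne_of_gt hθpos)
  have hhθlow : π / 2 ≤ (h : ℝ) * |θ| := by
    calc π / 2 = ((π / 2) / |θ|) * |θ| := hdiv.symm
    _ ≤ (h : ℝ) * |θ| := mul_le_mul_of_nonneg_right hh1 habs
  have hhθhigh : (h : ℝ) * |θ| ≤ π + π / 2 := by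
    have h3 := mul_lt_mul_of_pos_right hh2 hθpos
    rw [add_mul, hdiv, one_mul] at h3
    linarith
  have hh6 : (h : ℝ) * |θ| < 6 := by linarith
  have hhs : (h : ℝ) ≤ (s : ℝ) := by
    have h4 : (h : ℝ) * |θ| < (s : ℝ) * |θ| := by linarith
    exact le_of_lt (lt_of_mul_lt_mul_right h4 habs)
  have hhsℕ : h ≤ s := by exact_mod_cast hhs
  -- lower bound from the exponential factor
  have hdiff := ftheta_diff (block_fs hB) h θ
  have hlow : 2 * ‖ftheta K θ‖ ^ 2 ≤ ‖ftheta (fun y => K (y + h) - K y) θ‖ ^ 2 := by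
    rw [hdiff, norm_mul, mul_pow]
    have hcos : Real.cos (-(θ * h)) ≤ 0 := by
      rw [Real.cos_neg, ← Real.cos_abs]
      have habsm : |θ * (h : ℝ)| = (h : ℝ) * |θ| := by
        rw [abs_mul, _root_.abs_of_nonneg (by positivity : (0:ℝ) ≤ (h:ℝ))]; ring
      rw [habsm]
      exact Real.cos_nonpos_of_pi_div_two_le_of_le hhθlow hhθhigh
    have h2n := two_le_normsq_ee_sub_one hcos
    nlinarith [sq_nonneg (‖ftheta K θ‖), norm_nonneg (ftheta K θ)]
  -- upper bound for the difference transform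
  set Δ : ℤ → ℂ := fun y => K (y + h) - K y with hΔdef
  have hΔfs : FS Δ (s + h) := by
    intro y hy
    have hKy : K y = 0 := by
      refine block_fs hB y ?_
      push_cast at hy
      have : (0:ℤ) ≤ (h:ℤ) := by positivity
      linarith
    have hKyh : K (y + h) = 0 := by
      refine block_fs hB _ ?_
      have h1 : |y| ≤ |y + (h : ℤ)| + (h : ℤ) := by
        have := abs_add_le (y + (h : ℤ)) (-(h : ℤ))
        simp only [add_neg_cancel_right, abs_neg] at this
        have h2 : |(h : ℤ)| = (h : ℤ) := abs_of_nonneg (by positivity)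
        omega
      push_cast at hy
      linarith
    simp [hΔdef, hKy, hKyh]
  have hupper : ‖ftheta Δ θ‖ ≤ ∑ y ∈ Ic (s + h), ‖Δ y‖ := by
    calc ‖ftheta Δ θ‖ ≤ ∑' y : ℤ, ‖Δ y * ee (θ * y)‖ :=
          norm_tsum_le_tsum_norm
            (((hΔfs.mul_ee θ).imp (fun x hx => by rw [hx, norm_zero])).summable)
    _ = ∑' y : ℤ, ‖Δ y‖ := tsum_congr fun y => by rw [norm_mul, norm_ee, mul_one]
    _ = ∑ y ∈ Ic (s + h), ‖Δ y‖ := (hΔfs.imp fun x hx => by rw [hx, norm_zero]).tsum_eq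
  have hΔ2 : ∑ y ∈ Ic (s + h), ‖Δ y‖ ^ 2 ≤ D ^ 2 / s * ((h : ℝ) / s) ^ ω := by
    have hb := hB.2.2.2 (h : ℤ)
    have hcast : ((|(h : ℤ)| : ℤ) : ℝ) = (h : ℝ) := by
      rw [abs_of_nonneg (by positivity : (0:ℤ) ≤ (h:ℤ))]; push_cast; rfl
    rw [hcast] at hb
    rw [← (hΔfs.imp fun x hx => by rw [hx]; simp).tsum_eq]
    exact hb
  have hcard : (((Ic (s + h)).card : ℕ) : ℝ) ≤ 5 * s := by
    rw [card_Ic]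
    have hs1 : (1 : ℝ) ≤ (s : ℝ) := by exact_mod_cast hs
    push_cast
    linarith
  have hCS : (∑ y ∈ Ic (s + h), ‖Δ y‖) ^ 2
      ≤ (((Ic (s + h)).card : ℕ) : ℝ) * ∑ y ∈ Ic (s + h), ‖Δ y‖ ^ 2 := by
    have hcs := Finset.sum_mul_sq_le_sq_mul_sq (Ic (s + h)) (fun y => ‖Δ y‖) (fun _ => (1:ℝ))
    simp only [mul_one, one_pow, Finset.sum_const, nsmul_eq_mul] at hcs
    calc (∑ y ∈ Ic (s + h), ‖Δ y‖) ^ 2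
        ≤ (∑ y ∈ Ic (s + h), ‖Δ y‖ ^ 2) * (((Ic (s + h)).card : ℕ) : ℝ) := hcs
    _ = _ := mul_comm _ _
  have hnn : (0:ℝ) ≤ ∑ y ∈ Ic (s + h), ‖Δ y‖ := Finset.sum_nonneg fun y _ => norm_nonneg _
  have hfrac : (h : ℝ) / s ≤ 6 / ((s : ℝ) * |θ|) := by
    rw [div_le_div_iff₀ hs0 (by positivity)]
    nlinarith
  have hmono : ((h : ℝ) / s) ^ ω ≤ (6 / ((s : ℝ) * |θ|)) ^ ω :=
    Real.rpow_le_rpow (by positivity) hfrac hω.le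
  have hsum2nn : (0:ℝ) ≤ ∑ y ∈ Ic (s + h), ‖Δ y‖ ^ 2 :=
    Finset.sum_nonneg fun y _ => sq_nonneg _
  have hA : (((Ic (s + h)).card : ℕ) : ℝ) * ∑ y ∈ Ic (s + h), ‖Δ y‖ ^ 2
      ≤ (5 * s) * (D ^ 2 / s * ((h : ℝ) / s) ^ ω) :=
    mul_le_mul hcard hΔ2 hsum2nn (by positivity)
  have hup2 : ‖ftheta Δ θ‖ ^ 2 ≤ (∑ y ∈ Ic (s + h), ‖Δ y‖) ^ 2 :=
    pow_le_pow_left₀ (norm_nonneg _) hupper 2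
  have hmid : ‖ftheta K θ‖ ^ 2 ≤ (5 / 2) * D ^ 2 * ((h : ℝ) / s) ^ ω := by
    have hchain : ‖ftheta K θ‖ ^ 2 ≤ (1/2) * ((5 * s) * (D ^ 2 / s * ((h : ℝ) / s) ^ ω)) := by
      linarith [hlow, hup2, hCS, hA]
    have heq : (1/2) * ((5 * (s:ℝ)) * (D ^ 2 / s * ((h : ℝ) / s) ^ ω))
        = (5 / 2) * D ^ 2 * ((h : ℝ) / s) ^ ω := by
      field_simp
    rw [heq] at hchain
    exact hchain
  calc ‖ftheta K θ‖ ^ 2 ≤ (5 / 2) * D ^ 2 * ((h : ℝ) / s) ^ ω := hmid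
  _ ≤ (5 / 2) * D ^ 2 * (6 / ((s : ℝ) * |θ|)) ^ ω := by
      apply mul_le_mul_of_nonneg_left hmono (by positivity)
  _ ≤ 4 * D ^ 2 * (6 / ((s : ℝ) * |θ|)) ^ ω := by
      have := Real.rpow_nonneg (show (0:ℝ) ≤ 6 / ((s : ℝ) * |θ|) by positivity) ω
      nlinarith [sq_nonneg D]

/-- Per-block bound with geometric decay on both sides. -/
lemma block_min (hω : 0 < ω) (hB : IsCZBlock ω s D K) (hD : 0 ≤ D) (hs : 1 ≤ s)
    {θ : ℝ} (hθ : |θ| ≤ π) :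
    ‖ftheta K θ‖ ≤ c3 ω * D * min ((s : ℝ) * |θ|) (((s : ℝ) * |θ|) ^ (-(ω / 2))) := by
  have hs0 : (0 : ℝ) < s := by positivity
  set t := (s : ℝ) * |θ| with htdef
  have ht0 : 0 ≤ t := by positivity
  have hE1 : ‖ftheta K θ‖ ≤ 2 * D * t := by
    calc ‖ftheta K θ‖ ≤ 2 * D * s * |θ| := block_E1 hB hD hs θ
    _ = 2 * D * t := by rw [htdef]; ring
  have h6 : (1:ℝ) ≤ (6:ℝ) ^ (ω/2) := one_le_six_rpow (by linarith)
  have hc3 : (15 : ℝ) ≤ c3 ω := by unfold c3; nlinarith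
  have hc3pos := c3_pos ω
  rcases le_or_gt t 1 with h1 | h1
  · have hmin : min t (t ^ (-(ω/2))) = t := by
      apply min_eq_left
      rcases eq_or_lt_of_le ht0 with h0 | h0
      · rw [← h0, Real.zero_rpow (by intro hc; simp at hc; linarith)]
      · exact le_trans h1
          (Real.one_le_rpow_of_pos_of_le_one_of_nonpos h0 h1 (by linarith))
    rw [hmin]
    have hhint : (0:ℝ) ≤ (c3 ω - 2) * (D * t) := by
      apply mul_nonneg (by linarith) (mul_nonneg hD ht0)
    nlinarith [hhint]
  · have hmin : min t (t ^ (-(ω/2))) = t ^ (-(ω/2)) := by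
      apply min_eq_right
      exact le_trans (Real.rpow_le_one_of_one_le_of_nonpos h1.le (by linarith)) h1.le
    rw [hmin]
    have htpos : 0 < t := lt_trans one_pos h1
    have htexp : 0 ≤ t ^ (-(ω/2)) := Real.rpow_nonneg ht0 _
    rcases lt_or_ge t 6 with h6t | h6t
    · -- medium frequencies: use E1
      have hrp : (6:ℝ) ^ (-(ω/2)) ≤ t ^ (-(ω/2)) := by
        rw [Real.rpow_neg (by norm_num : (0:ℝ) ≤ 6), Real.rpow_neg ht0]
        have hmono : t ^ (ω/2) ≤ (6:ℝ) ^ (ω/2) :=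
          Real.rpow_le_rpow ht0 h6t.le (by linarith)
        exact inv_anti₀ (Real.rpow_pos_of_pos htpos _) hmono
      have hcancel : (6:ℝ) ^ (ω/2) * (6:ℝ) ^ (-(ω/2)) = 1 := by
        rw [← Real.rpow_add (by norm_num : (0:ℝ) < 6)]
        simp
      have hkey : (15 : ℝ) * D ≤ c3 ω * D * ((6:ℝ) ^ (-(ω/2))) := by
        have : c3 ω * ((6:ℝ) ^ (-(ω/2))) = 15 := by
          unfold c3; rw [mul_assoc, hcancel, mul_one]
        nlinarith [this]
      calc ‖ftheta K θ‖ ≤ 2 * D * t := hE1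
      _ ≤ 15 * D := by nlinarith
      _ ≤ c3 ω * D * ((6:ℝ) ^ (-(ω/2))) := hkey
      _ ≤ c3 ω * D * t ^ (-(ω/2)) := by
          apply mul_le_mul_of_nonneg_left hrp (by positivity)
    · -- high frequencies: use E2
      have hsq := block_E2 hω hB hD hs hθ (h6t.trans_eq htdef)
      have hRHS : (0:ℝ) ≤ c3 ω * D * t ^ (-(ω/2)) := by positivity
      refine (pow_le_pow_iff_left₀ (norm_nonneg _) hRHS two_ne_zero).1 ?_
      have hexp : (t ^ (-(ω/2))) ^ (2:ℕ) = (t ^ ω)⁻¹ := by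
        rw [← Real.rpow_natCast (t ^ (-(ω/2))) 2, ← Real.rpow_mul ht0]
        have : (-(ω/2)) * ((2:ℕ):ℝ) = -ω := by push_cast; ring
        rw [this, Real.rpow_neg ht0]
      have h62 : ((6:ℝ) ^ (ω/2)) ^ (2:ℕ) = (6:ℝ) ^ ω := by
        rw [← Real.rpow_natCast ((6:ℝ) ^ (ω/2)) 2, ← Real.rpow_mul (by norm_num : (0:ℝ) ≤ 6)]
        congr 1
        push_cast; ring
      have hdivpow : (6 / t) ^ ω = (6:ℝ) ^ ω * (t ^ ω)⁻¹ := by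
        rw [Real.div_rpow (by norm_num) ht0, div_eq_mul_inv]
      have hc3sq : (c3 ω * D * t ^ (-(ω/2))) ^ (2:ℕ)
          = 225 * ((6:ℝ) ^ ω) * D ^ 2 * (t ^ ω)⁻¹ := by
        rw [mul_pow, mul_pow, hexp]
        unfold c3
        rw [mul_pow, h62]
        ring
      rw [hc3sq]
      have h6ω : (0:ℝ) ≤ (6:ℝ) ^ ω := Real.rpow_nonneg (by norm_num) ω
      have htω : (0:ℝ) ≤ (t ^ ω)⁻¹ := by positivity
      calc ‖ftheta K θ‖ ^ 2 ≤ 4 * D ^ 2 * (6 / t) ^ ω := hsq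
      _ = 4 * ((6:ℝ) ^ ω) * D ^ 2 * (t ^ ω)⁻¹ := by rw [hdivpow]; ring
      _ ≤ 225 * ((6:ℝ) ^ ω) * D ^ 2 * (t ^ ω)⁻¹ := by nlinarith [sq_nonneg D]

end Blocks2

end CZaux

namespace CZaux

open Finset

lemma sum_min_le {ω : ℝ} (hω : 0 < ω) {r : ℝ} (hr : 0 ≤ r) (P : ℕ) :
    ∑ n ∈ Finset.range P, min ((2:ℝ)^n * r) (((2:ℝ)^n * r) ^ (-(ω/2))) ≤ SΩ ω := by
  classical
  set x := (2:ℝ) ^ (-(ω/2)) with hxdef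
  have hx0 := x2_pos ω
  have hx1 := x2_lt_one hω
  have h1x : (0:ℝ) < 1 - x := by linarith
  set F : ℕ → ℝ := fun n => min ((2:ℝ)^n * r) (((2:ℝ)^n * r) ^ (-(ω/2))) with hF
  have hFnonneg : ∀ n, 0 ≤ F n := fun n => le_min (by positivity) (Real.rpow_nonneg (by positivity) _)
  set S₁ := (Finset.range P).filter (fun n => (2:ℝ)^n * r ≤ 1) with hS₁
  set S₂ := (Finset.range P).filter (fun n => ¬((2:ℝ)^n * r ≤ 1)) with hS₂
  have hsplit : ∑ n ∈ Finset.range P, F n = ∑ n ∈ S₁, F n + ∑ n ∈ S₂, F n :=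
    (Finset.sum_filter_add_sum_filter_not _ _ _).symm
  have hA : ∑ n ∈ S₁, F n ≤ 2 := by
    have hstep : ∑ n ∈ S₁, F n ≤ ∑ n ∈ S₁, (2:ℝ)^n * r :=
      Finset.sum_le_sum fun n _ => min_le_left _ _
    rcases S₁.eq_empty_or_nonempty with hemp | hne
    · rw [hemp] at hstep; simp at hstep
      linarith [Finset.sum_nonneg fun n (hn : n ∈ S₁) => hFnonneg n, hstep,
        (by rw [hemp]; simp : ∑ n ∈ S₁, F n = 0)]
    · set N' := S₁.max' hne with hN'
      have hmem : N' ∈ S₁ := S₁.max'_mem hne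
      have hN'le : (2:ℝ)^N' * r ≤ 1 := (Finset.mem_filter.1 hmem).2
      have hsub : S₁ ⊆ Finset.range (N' + 1) := fun n hn =>
        Finset.mem_range.2 (Nat.lt_succ_of_le (S₁.le_max' n hn))
      have h2 : ∑ n ∈ S₁, (2:ℝ)^n * r ≤ ∑ n ∈ Finset.range (N' + 1), (2:ℝ)^n * r :=
        Finset.sum_le_sum_of_subset_of_nonneg hsub (fun n _ _ => by positivity)
      have hgeom : ∑ n ∈ Finset.range (N' + 1), (2:ℝ)^n = 2^(N'+1) - 1 := by
        have := geom_sum_eq (by norm_num : (2:ℝ) ≠ 1) (N'+1)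
        rw [this]; norm_num
      have h3 : ∑ n ∈ Finset.range (N' + 1), (2:ℝ)^n * r = (2^(N'+1) - 1) * r := by
        rw [← Finset.sum_mul, hgeom]
      have h4 : ((2:ℝ)^(N'+1) - 1) * r ≤ 2 := by
        have hp : (0:ℝ) < (2:ℝ)^N' := by positivity
        have : (2:ℝ)^(N'+1) = 2 * (2:ℝ)^N' := by rw [pow_succ]; ring
        nlinarith
      linarith
  have hB : ∑ n ∈ S₂, F n ≤ (1 - x)⁻¹ := by
    have hstep : ∑ n ∈ S₂, F n ≤ ∑ n ∈ S₂, ((2:ℝ)^n * r) ^ (-(ω/2)) :=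
      Finset.sum_le_sum fun n _ => min_le_right _ _
    rcases S₂.eq_empty_or_nonempty with hemp | hne
    · rw [hemp, Finset.sum_empty]
      exact le_of_lt (inv_pos.2 h1x)
    · set n₁ := S₂.min' hne with hn₁
      have hmem : n₁ ∈ S₂ := S₂.min'_mem hne
      have hn₁gt : 1 < (2:ℝ)^n₁ * r := lt_of_not_ge (Finset.mem_filter.1 hmem).2
      have hxk : ∀ k : ℕ, ((2:ℝ)^k : ℝ) ^ (-(ω/2)) = x ^ k := by
        intro k
        rw [← Real.rpow_natCast (2:ℝ) k, ← Real.rpow_mul (by norm_num : (0:ℝ) ≤ 2),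
          mul_comm, Real.rpow_mul (by norm_num : (0:ℝ) ≤ 2), Real.rpow_natCast]
      have hterm : ∀ n ∈ S₂, ((2:ℝ)^n * r) ^ (-(ω/2)) ≤ x ^ (n - n₁) := by
        intro n hn
        have hn1le : n₁ ≤ n := S₂.min'_le n hn
        have hpos : (0:ℝ) < (2:ℝ)^(n - n₁) := by positivity
        have hge : (2:ℝ)^(n - n₁) ≤ (2:ℝ)^n * r := by
          have h2 : (2:ℝ)^n * r = (2:ℝ)^(n - n₁) * ((2:ℝ)^n₁ * r) := by
            rw [← mul_assoc, ← pow_add]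
            congr 2
            omega
          rw [h2]
          nlinarith
        have hanti : ((2:ℝ)^n * r) ^ (-(ω/2)) ≤ ((2:ℝ)^(n - n₁) : ℝ) ^ (-(ω/2)) := by
          rw [Real.rpow_neg hpos.le, Real.rpow_neg (by positivity)]
          exact inv_anti₀ (Real.rpow_pos_of_pos hpos _)
            (Real.rpow_le_rpow hpos.le hge (by linarith))
        exact le_trans hanti (le_of_eq (hxk _))
      have h2 : ∑ n ∈ S₂, ((2:ℝ)^n * r) ^ (-(ω/2)) ≤ ∑ n ∈ S₂, x ^ (n - n₁) :=
        Finset.sum_le_sum hterm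
      have h3 : ∑ n ∈ S₂, x ^ (n - n₁) = ∑ k ∈ S₂.image (· - n₁), x ^ k := by
        rw [Finset.sum_image]
        intro a ha b hb hab
        have ha1 : n₁ ≤ a := S₂.min'_le a ha
        have hb1 : n₁ ≤ b := S₂.min'_le b hb
        beta_reduce at hab; omega
      have h4 : ∑ k ∈ S₂.image (· - n₁), x ^ k ≤ ∑ k ∈ Finset.range P, x ^ k := by
        refine Finset.sum_le_sum_of_subset_of_nonneg ?_ (fun k _ _ => by positivity)
        intro k hk
        obtain ⟨n, hn, rfl⟩ := Finset.mem_image.1 hk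
        have : n < P := Finset.mem_range.1 (Finset.mem_filter.1 hn).1
        exact Finset.mem_range.2 (by omega)
      have h5 : ∑ k ∈ Finset.range P, x ^ k ≤ (1 - x)⁻¹ := by
        rw [geom_sum_eq (ne_of_lt hx1)]
        have hxP : (0:ℝ) ≤ x ^ P := by positivity
        have heq : (x ^ P - 1) / (x - 1) = (1 - x ^ P) / (1 - x) := by
          rw [div_eq_div_iff (by linarith) (by linarith)]
          ring
        rw [heq, div_le_iff₀ h1x]
        have : (1 - x)⁻¹ * (1 - x) = 1 := inv_mul_cancel₀ (by linarith)
        rw [this]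
        linarith
      linarith
  rw [hsplit]
  unfold SΩ
  rw [← hxdef]
  linarith

lemma mult_point {ω : ℝ} (hω : 0 < ω) {D : ℝ} (hD : 0 ≤ D) {L : ℕ → ℤ → ℂ}
    (hL : ∀ n, IsCZBlock ω (2^n) D (L n)) (P : ℕ) {θ : ℝ} (hθ : |θ| ≤ π) :
    ‖ftheta (fun y => ∑ n ∈ Finset.range P, L n y) θ‖ ≤ C1 ω * D := by
  have hsum : ftheta (fun y => ∑ n ∈ Finset.range P, L n y) θ
      = ∑ n ∈ Finset.range P, ftheta (L n) θ := by
    calc ftheta (fun y => ∑ n ∈ Finset.range P, L n y) θ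
        = ∑' y : ℤ, ∑ n ∈ Finset.range P, (L n y * ee (θ * y)) :=
          tsum_congr fun y => Finset.sum_mul _ _ _
    _ = ∑ n ∈ Finset.range P, ∑' y : ℤ, L n y * ee (θ * y) :=
          Summable.tsum_finsetSum (fun n _ => ((block_fs (hL n)).mul_ee θ).summable)
  rw [hsum]
  have hc3pos := c3_pos ω
  calc ‖∑ n ∈ Finset.range P, ftheta (L n) θ‖
      ≤ ∑ n ∈ Finset.range P, ‖ftheta (L n) θ‖ := norm_sum_le _ _
  _ ≤ ∑ n ∈ Finset.range P, c3 ω * D * min ((2:ℝ)^n * |θ|) (((2:ℝ)^n * |θ|) ^ (-(ω/2))) := by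
      refine Finset.sum_le_sum fun n _ => ?_
      have hbl := block_min hω (hL n) hD (Nat.one_le_two_pow) hθ
      have hcast : (((2:ℕ)^n : ℕ) : ℝ) = (2:ℝ)^n := by push_cast; rfl
      rwa [hcast] at hbl
  _ = c3 ω * D * ∑ n ∈ Finset.range P, min ((2:ℝ)^n * |θ|) (((2:ℝ)^n * |θ|) ^ (-(ω/2))) := by
      rw [Finset.mul_sum]
  _ ≤ c3 ω * D * SΩ ω := by
      apply mul_le_mul_of_nonneg_left (sum_min_le hω (abs_nonneg θ) P) (by positivity)
  _ = C1 ω * D := by rw [C1]; ring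

lemma dft_bound {f : ℤ → ℂ} {q j : ℕ} (hq : 0 < q) (hj : j < q) {B : ℝ}
    (hB : ∀ θ : ℝ, |θ| ≤ π → ‖ftheta f θ‖ ≤ B) : ‖dft q f j‖ ≤ B := by
  have hπ := Real.pi_pos
  have hq0 : (0:ℝ) < q := by exact_mod_cast hq
  have hjq : (j:ℝ) ≤ q := by exact_mod_cast hj.le
  by_cases hcase : 2 * j ≤ q
  · apply hB
    have hc : (2 * j : ℝ) ≤ q := by exact_mod_cast hcase
    rw [abs_neg, _root_.abs_of_nonneg (by positivity)]
    rw [div_le_iff₀ hq0]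
    nlinarith
  · push_neg at hcase
    have hc : (q:ℝ) < 2 * j := by exact_mod_cast hcase
    rw [dft, ← ftheta_add_two_pi f (-(2*π*j/q))]
    apply hB
    have hval : -(2*π*(j:ℝ)/q) + 2*π = (2*π*((q:ℝ) - j))/q := by field_simp; ring
    rw [hval, _root_.abs_of_nonneg (by
      apply div_nonneg _ hq0.le
      nlinarith)]
    rw [div_le_iff₀ hq0]
    nlinarith

lemma mult_l2 {ω : ℝ} (hω : 0 < ω) {D : ℝ} (hD : 0 ≤ D) {L : ℕ → ℤ → ℂ}
    (hL : ∀ n, IsCZBlock ω (2^n) D (L n)) (P R : ℕ) {f : ℤ → ℂ} (hf : FS f R) :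
    ∑' x : ℤ, ‖conv f (fun y => ∑ n ∈ Finset.range P, L n y) x‖ ^ 2
      ≤ (C1 ω * D) ^ 2 * ∑' x : ℤ, ‖f x‖ ^ 2 := by
  set M := fun y => ∑ n ∈ Finset.range P, L n y with hM
  have hMfs : FS M (2^P) := by
    intro y hy
    refine Finset.sum_eq_zero fun n hn => (hL n).2.1 y ?_
    have hle : ((2^n : ℕ) : ℤ) ≤ ((2^P : ℕ) : ℤ) := by
      exact_mod_cast Nat.pow_le_pow_right (by norm_num) (Finset.mem_range.1 hn).le
    exact lt_of_le_of_lt hle hy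
  have hconvfs : FS (conv f M) (R + 2^P) := conv_fs hf hMfs
  set q := 2 * (R + 2^P) + 1 with hq
  have hq0 : 0 < q := by omega
  have hP1 := parseval (q := q) hconvfs (by omega)
  have hP2 := parseval (q := q) hf (by have := Nat.one_le_two_pow (n := P); omega)
  have hprod : ∀ j, dft q (conv f M) j = dft q f j * dft q M j := fun j =>
    ftheta_conv hf hMfs _
  have hMb : ∀ j, j < q → ‖dft q M j‖ ≤ C1 ω * D := fun j hj =>
    dft_bound hq0 hj (fun θ hθ => mult_point hω hD hL P hθ)
  have hsum : ∑ j ∈ Finset.range q, ‖dft q (conv f M) j‖^2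
      ≤ (C1 ω * D)^2 * ∑ j ∈ Finset.range q, ‖dft q f j‖^2 := by
    rw [Finset.mul_sum]
    refine Finset.sum_le_sum fun j hj => ?_
    rw [hprod j, norm_mul, mul_pow]
    have h1 : ‖dft q M j‖^2 ≤ (C1 ω * D)^2 :=
      pow_le_pow_left₀ (norm_nonneg _) (hMb j (Finset.mem_range.1 hj)) 2
    calc ‖dft q f j‖^2 * ‖dft q M j‖^2
        ≤ ‖dft q f j‖^2 * (C1 ω * D)^2 := mul_le_mul_of_nonneg_left h1 (by positivity)
    _ = (C1 ω * D)^2 * ‖dft q f j‖^2 := mul_comm _ _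
  have hqR : (0:ℝ) < q := by exact_mod_cast hq0
  have hfinal : (q:ℝ) * ∑' x : ℤ, ‖conv f M x‖^2
      ≤ (q:ℝ) * ((C1 ω * D)^2 * ∑' x : ℤ, ‖f x‖^2) := by
    rw [hP1]
    calc ∑ j ∈ Finset.range q, ‖dft q (conv f M) j‖^2
        ≤ (C1 ω * D)^2 * ∑ j ∈ Finset.range q, ‖dft q f j‖^2 := hsum
    _ = (C1 ω * D)^2 * ((q:ℝ) * ∑' x : ℤ, ‖f x‖^2) := by rw [← hP2]
    _ = (q:ℝ) * ((C1 ω * D)^2 * ∑' x : ℤ, ‖f x‖^2) := by ring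
  exact le_of_mul_le_mul_left hfinal hqR

end CZaux

namespace CZaux

lemma conv_zero_left' (g : ℤ → ℂ) (x : ℤ) : conv (0 : ℤ → ℂ) g x = 0 := by
  simp [conv]

/-- Mean of a convolution is the product of the means. -/
lemma conv_tsum_eq {f g : ℤ → ℂ} {N M : ℕ} (hf : FS f N) (hg : FS g M) :
    ∑' x : ℤ, conv f g x = (∑' x : ℤ, f x) * (∑' x : ℤ, g x) := by
  rw [← ftheta_zero (conv f g), ← ftheta_zero f, ← ftheta_zero g]
  exact ftheta_conv hf hg 0

lemma FS.delta {f : ℤ → ℂ} {N : ℕ} (hf : FS f N) (h : ℤ) :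
    FS (fun x => f (x + h) - f x) (N + h.natAbs) := by
  intro x hx
  push_cast at hx
  show f (x + h) - f x = 0
  have h1 : f x = 0 := by
    refine hf x ?_
    have := abs_nonneg h
    linarith
  have h2 : f (x + h) = 0 := by
    refine hf _ ?_
    have h3 : |x| ≤ |x + h| + |h| := by
      have := abs_add_le (x + h) (-h)
      simpa using this
    linarith
  rw [h1, h2, sub_zero]

/-- ℓ² bound for a sum of two finitely supported functions. -/
lemma l2_add {a b : ℤ → ℂ} {Na Nb : ℕ} (ha : FS a Na) (hb : FS b Nb) :
    ∑' x : ℤ, ‖a x + b x‖ ^ 2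
      ≤ 2 * ∑' x : ℤ, ‖a x‖ ^ 2 + 2 * ∑' x : ℤ, ‖b x‖ ^ 2 := by
  set N := max Na Nb with hN
  have ha' : FS a N := ha.mono (le_max_left _ _)
  have hb' : FS b N := hb.mono (le_max_right _ _)
  have hab : FS (fun x => a x + b x) N := fun x hx => by
    show a x + b x = 0
    rw [ha' x hx, hb' x hx, add_zero]
  rw [(hab.imp fun x hx => by rw [hx]; simp).tsum_eq,
    (ha'.imp fun x hx => by rw [hx]; simp).tsum_eq,
    (hb'.imp fun x hx => by rw [hx]; simp).tsum_eq]
  have hpt : ∀ x ∈ Ic N, ‖a x + b x‖ ^ 2 ≤ 2 * ‖a x‖ ^ 2 + 2 * ‖b x‖ ^ 2 := by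
    intro x _
    have h1 := norm_add_le (a x) (b x)
    have h2 : ‖a x + b x‖ ^ 2 ≤ (‖a x‖ + ‖b x‖) ^ 2 :=
      pow_le_pow_left₀ (norm_nonneg _) h1 2
    nlinarith [sq_nonneg (‖a x‖ - ‖b x‖)]
  calc ∑ x ∈ Ic N, ‖a x + b x‖ ^ 2 ≤ ∑ x ∈ Ic N, (2 * ‖a x‖ ^ 2 + 2 * ‖b x‖ ^ 2) :=
        Finset.sum_le_sum hpt
  _ = 2 * ∑ x ∈ Ic N, ‖a x‖ ^ 2 + 2 * ∑ x ∈ Ic N, ‖b x‖ ^ 2 := by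
      rw [Finset.sum_add_distrib, Finset.mul_sum, Finset.mul_sum]

noncomputable def w : ℝ := (2 : ℝ) ^ (-(2⁻¹ : ℝ))

lemma w_pos : 0 < w := Real.rpow_pos_of_pos (by norm_num) _

lemma w_lt_one : w < 1 := Real.rpow_lt_one_of_one_lt_of_neg (by norm_num) (by norm_num)

lemma w_sq : w ^ (2 : ℕ) = 2⁻¹ := by
  rw [w, ← Real.rpow_natCast ((2:ℝ) ^ (-(2⁻¹:ℝ))) 2, ← Real.rpow_mul (by norm_num : (0:ℝ) ≤ 2)]
  norm_num

lemma pow2_cast (n : ℕ) : (((2:ℕ)^n : ℕ) : ℝ) = (2:ℝ)^n := by push_cast; rfl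

lemma two_pow_inv_eq (n : ℕ) : ((2:ℝ)^n)⁻¹ = (w ^ n) ^ (2:ℕ) := by
  rw [← pow_mul, mul_comm n 2, pow_mul, w_sq, inv_pow]

/-- Pointwise bound for a block. -/
lemma block_pointwise {ω : ℝ} {n : ℕ} {D : ℝ} {K : ℤ → ℂ}
    (hB : IsCZBlock ω (2^n) D K) (hD : 0 ≤ D) (z : ℤ) : ‖K z‖ ≤ D * w ^ n := by
  have hsummable : Summable fun y : ℤ => ‖K y‖ ^ 2 :=
    ((block_fs hB).imp fun x hx => by rw [hx]; simp).summable
  have hle : ‖K z‖ ^ 2 ≤ D ^ 2 / ((2^n : ℕ) : ℝ) :=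
    le_trans (Summable.le_tsum hsummable z (fun _ _ => sq_nonneg _)) hB.2.2.1
  have hrhs : (0:ℝ) ≤ D * w ^ n := mul_nonneg hD (pow_nonneg w_pos.le n)
  refine (pow_le_pow_iff_left₀ (norm_nonneg _) hrhs two_ne_zero).1 ?_
  calc ‖K z‖ ^ 2 ≤ D ^ 2 / ((2^n : ℕ) : ℝ) := hle
  _ = (D * w ^ n) ^ 2 := by
      rw [pow2_cast, div_eq_mul_inv, two_pow_inv_eq, mul_pow]

/-- ℓ¹ bound for a product slice, via Cauchy–Schwarz. -/
lemma slice_l1 {ω : ℝ} {K L : ℤ → ℂ} {m n : ℕ} {DK DL : ℝ}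
    (hK : IsCZBlock ω (2^m) DK K) (hL : IsCZBlock ω (2^n) DL L)
    (hDK : 0 ≤ DK) (hDL : 0 ≤ DL) (x : ℤ) :
    ∑' y : ℤ, ‖K (x - y) * L y‖ ≤ (DK * w ^ m) * (DL * w ^ n) := by
  have hfs : FS (fun y => ‖K (x - y) * L y‖) (2^n) := fun y hy => by
    show ‖K (x - y) * L y‖ = 0
    rw [block_fs hL y hy, mul_zero, norm_zero]
  rw [hfs.tsum_eq]
  set A := ∑ y ∈ Ic (2^n), ‖K (x - y)‖ ^ 2 with hA
  have hKsum : A ≤ DK ^ 2 / ((2^m : ℕ) : ℝ) := by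
    have hKsummable : Summable fun z : ℤ => ‖K z‖ ^ 2 :=
      ((block_fs hK).imp fun z hz => by rw [hz]; simp).summable
    have himg : A = ∑ z ∈ (Ic (2^n)).image (fun y => x - y), ‖K z‖ ^ 2 := by
      rw [Finset.sum_image]
      intro a _ b _ hab
      beta_reduce at hab; omega
    rw [himg]
    exact le_trans (Summable.sum_le_tsum _ (fun z _ => sq_nonneg _) hKsummable) hK.2.2.1
  have hLsum : ∑ y ∈ Ic (2^n), ‖L y‖ ^ 2 ≤ DL ^ 2 / ((2^n : ℕ) : ℝ) := block_l2_sum hL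
  have hcs := Finset.sum_mul_sq_le_sq_mul_sq (Ic (2^n))
    (fun y => ‖K (x - y)‖) (fun y => ‖L y‖)
  have hnn : (0:ℝ) ≤ ∑ y ∈ Ic (2^n), ‖K (x - y)‖ * ‖L y‖ :=
    Finset.sum_nonneg fun y _ => by positivity
  have hrhs : (0:ℝ) ≤ (DK * w ^ m) * (DL * w ^ n) :=
    mul_nonneg (mul_nonneg hDK (pow_nonneg w_pos.le m))
      (mul_nonneg hDL (pow_nonneg w_pos.le n))
  have hsq : (∑ y ∈ Ic (2^n), ‖K (x - y)‖ * ‖L y‖) ^ 2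
      ≤ ((DK * w ^ m) * (DL * w ^ n)) ^ 2 := by
    calc (∑ y ∈ Ic (2^n), ‖K (x - y)‖ * ‖L y‖) ^ 2
        ≤ A * ∑ y ∈ Ic (2^n), ‖L y‖ ^ 2 := hcs
    _ ≤ (DK ^ 2 / ((2^m : ℕ) : ℝ)) * (DL ^ 2 / ((2^n : ℕ) : ℝ)) := by
        apply mul_le_mul hKsum hLsum (Finset.sum_nonneg fun y _ => sq_nonneg _)
        positivity
    _ = ((DK * w ^ m) * (DL * w ^ n)) ^ 2 := by
        rw [pow2_cast, pow2_cast, div_eq_mul_inv, div_eq_mul_inv,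
          two_pow_inv_eq, two_pow_inv_eq]
        ring
  have := (pow_le_pow_iff_left₀ hnn hrhs two_ne_zero).1 hsq
  calc ∑ y ∈ Ic (2^n), ‖K (x - y) * L y‖ = ∑ y ∈ Ic (2^n), ‖K (x - y)‖ * ‖L y‖ :=
        Finset.sum_congr rfl fun y _ => norm_mul _ _
  _ ≤ (DK * w ^ m) * (DL * w ^ n) := this

end CZaux

namespace CZaux

lemma sumfun_fs {L : ℕ → ℤ → ℂ} (hL : ∀ n, FS (L n) (2^n)) (P : ℕ) :
    FS (fun y => ∑ n ∈ Finset.range P, L n y) (2^P) := by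
  intro y hy
  refine Finset.sum_eq_zero fun n hn => hL n y ?_
  have hle : ((2^n : ℕ) : ℤ) ≤ ((2^P : ℕ) : ℤ) := by
    exact_mod_cast Nat.pow_le_pow_right (by norm_num) (Finset.mem_range.1 hn).le
  exact lt_of_le_of_lt hle hy

def fib (p : ℕ) : Finset (ℕ × ℕ) :=
  ((Finset.range p).image fun n => (p - 1, n)) ∪
    ((Finset.range (p - 1)).image fun m => (m, p - 1))

lemma mem_fib {p : ℕ} {mn : ℕ × ℕ} : mn ∈ fib p ↔ max mn.1 mn.2 + 1 = p := by
  obtain ⟨a, b⟩ := mn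
  simp only [fib, Finset.mem_union, Finset.mem_image, Finset.mem_range, Prod.mk.injEq]
  constructor
  · rintro (⟨n, hn, rfl, rfl⟩ | ⟨m, hm, rfl, rfl⟩)
    · have hb : n ≤ p - 1 := by omega
      rw [Nat.max_eq_left hb]; omega
    · have hm' : m ≤ p - 1 := by omega
      rw [Nat.max_eq_right hm']; omega
  · intro hmax
    rcases lt_or_ge a b with hab | hab
    · right
      have hb : max a b = b := Nat.max_eq_right hab.le
      rw [hb] at hmax
      exact ⟨a, by omega, rfl, by omega⟩
    · left
      have ha : max a b = a := Nat.max_eq_left hab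
      rw [ha] at hmax
      exact ⟨b, by omega, by omega, rfl⟩

lemma fib_sum (p : ℕ) (F : ℕ × ℕ → ℂ) :
    ∑ mn ∈ fib (p+1), F mn
      = ∑ n ∈ Finset.range (p+1), F (p, n) + ∑ m ∈ Finset.range p, F (m, p) := by
  have hdisj : Disjoint ((Finset.range (p+1)).image fun n => (p+1-1, n))
      ((Finset.range (p+1-1)).image fun m => (m, p+1-1)) := by
    rw [Finset.disjoint_left]
    rintro ⟨a, b⟩ ha hb
    simp only [Finset.mem_image, Finset.mem_range, Prod.mk.injEq] at ha hb
    obtain ⟨n, hn, h1, h2⟩ := ha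
    obtain ⟨m, hm, h3, h4⟩ := hb
    omega
  rw [fib, Finset.sum_union hdisj, Finset.sum_image (by intro x _ y _ h; simpa using h),
    Finset.sum_image (by intro x _ y _ h; simpa using h)]
  simp

end CZaux

namespace CZaux

lemma arith1 {c1 C DK DL P : ℝ} (hP : 0 < P) (h : 8 * c1^2 ≤ C^2) :
    2 * ((c1 * DL)^2 * (DK^2 / P)) + 2 * ((c1 * DK)^2 * (DL^2 / P))
      ≤ (C * DK * DL)^2 / (2 * P) := by
  have h1 : 2 * ((c1 * DL)^2 * (DK^2 / P)) + 2 * ((c1 * DK)^2 * (DL^2 / P))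
      = (4 * c1^2 * DK^2 * DL^2) / P := by field_simp; ring
  rw [h1, div_le_div_iff₀ hP (by positivity : (0:ℝ) < 2 * P)]
  nlinarith [mul_nonneg (sub_nonneg.2 h) (mul_nonneg (mul_nonneg (sq_nonneg DK) (sq_nonneg DL)) (sq_nonneg P)), sq_nonneg P, hP]

lemma arith2 {c1 C DK DL P T Y : ℝ} (hP : 0 < P) (hY : 0 ≤ Y) (hT : 0 ≤ T)
    (h : 8 * T * c1^2 ≤ C^2) :
    2 * ((c1 * DL)^2 * (DK^2 / P * (T * Y))) + 2 * ((c1 * DK)^2 * (DL^2 / P * (T * Y)))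
      ≤ (C * DK * DL)^2 / (2 * P) * Y := by
  have h1 : 2 * ((c1 * DL)^2 * (DK^2 / P * (T * Y))) + 2 * ((c1 * DK)^2 * (DL^2 / P * (T * Y)))
      = (4 * T * c1^2 * DK^2 * DL^2 * Y) / P := by field_simp; ring
  have h2 : (C * DK * DL)^2 / (2 * P) * Y = (C^2 * DK^2 * DL^2 * Y) / (2 * P) := by
    rw [div_mul_eq_mul_div]; congr 1; ring
  rw [h1, h2]
  rw [div_le_div_iff₀ hP (by positivity : (0:ℝ) < 2 * P)]
  nlinarith [mul_nonneg (mul_nonneg (sub_nonneg.2 h)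
      (mul_nonneg (mul_nonneg (sq_nonneg DK) (sq_nonneg DL)) hY)) (sq_nonneg P), hP, sq_nonneg P]

end CZaux

namespace CZaux

theorem pb_block {ω : ℝ} (hω : 0 < ω) {DK DL : ℝ} {Kb Lb : ℕ → ℤ → ℂ}
    (hDK : 0 < DK) (hDL : 0 < DL)
    (hKb : ∀ m, IsCZBlock ω (2^m) DK (Kb m)) (hLb : ∀ m, IsCZBlock ω (2^m) DL (Lb m))
    (p : ℕ) :
    IsCZBlock ω (2^(p+1)) ((3 * C1 ω * ((2:ℝ)^(ω/2) + 1)) * DK * DL)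
      (fun x => ∑ mn ∈ fib (p+1), conv (Kb mn.1) (Lb mn.2) x) := by
  have hc1 := C1_pos hω
  have hKfs : ∀ k, FS (Kb k) (2^k) := fun k => block_fs (hKb k)
  have hLfs : ∀ k, FS (Lb k) (2^k) := fun k => block_fs (hLb k)
  set MsumL : ℤ → ℂ := fun y => ∑ n ∈ Finset.range (p+1), Lb n y with hMsumL
  set MsumK : ℤ → ℂ := fun y => ∑ m ∈ Finset.range p, Kb m y with hMsumK
  set A : ℤ → ℂ := conv (Kb p) MsumL with hAdef
  set B : ℤ → ℂ := conv (Lb p) MsumK with hBdef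
  have hMLfs : FS MsumL (2^(p+1)) := sumfun_fs hLfs (p+1)
  have hMKfs : FS MsumK (2^p) := sumfun_fs hKfs p
  have hAfs : FS A (2^p + 2^(p+1)) := conv_fs (hKfs p) hMLfs
  have hBfs : FS B (2^p + 2^p) := conv_fs (hLfs p) hMKfs
  have hsplit : ∀ x, (∑ mn ∈ fib (p+1), conv (Kb mn.1) (Lb mn.2) x) = A x + B x := by
    intro x
    rw [fib_sum p (fun mn => conv (Kb mn.1) (Lb mn.2) x)]
    congr 1
    · exact (conv_sum_right (Kb p) (fun n _ => hLfs n) x).symm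
    · rw [hBdef, conv_sum_right (Lb p) (fun m _ => hKfs m) x]
      exact Finset.sum_congr rfl fun m _ => conv_comm (Kb m) (Lb p) x
  have hrad : ∀ mn ∈ fib (p+1), FS (conv (Kb mn.1) (Lb mn.2)) (2^(p+1)) := by
    intro mn hmn
    have hmax := mem_fib.1 hmn
    have h1 : mn.1 ≤ p := by have := le_max_left mn.1 mn.2; omega
    have h2 : mn.2 ≤ p := by have := le_max_right mn.1 mn.2; omega
    refine (conv_fs (hKfs mn.1) (hLfs mn.2)).mono ?_
    have e1 : (2:ℕ)^mn.1 ≤ 2^p := Nat.pow_le_pow_right (by norm_num) h1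
    have e2 : (2:ℕ)^mn.2 ≤ 2^p := Nat.pow_le_pow_right (by norm_num) h2
    have e3 : (2:ℕ)^(p+1) = 2^p + 2^p := by rw [pow_succ]; omega
    omega
  have hPbFS : FS (fun x => ∑ mn ∈ fib (p+1), conv (Kb mn.1) (Lb mn.2) x) (2^(p+1)) := by
    intro x hx
    exact Finset.sum_eq_zero fun mn hmn => hrad mn hmn x hx
  -- numeric facts
  have ht2 : (1:ℝ) ≤ (2:ℝ)^(ω/2) := by
    calc (1:ℝ) = (2:ℝ)^(0:ℝ) := (Real.rpow_zero 2).symm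
    _ ≤ _ := Real.rpow_le_rpow_of_exponent_le (by norm_num) (by linarith)
  have ht2sq : ((2:ℝ)^(ω/2))^(2:ℕ) = (2:ℝ)^ω := by
    rw [← Real.rpow_natCast ((2:ℝ)^(ω/2)) 2, ← Real.rpow_mul (by norm_num : (0:ℝ) ≤ 2)]
    congr 1; push_cast; ring
  have hcastp : ((2^p : ℕ) : ℝ) = (2:ℝ)^p := pow2_cast p
  have hcastp1 : (((2:ℕ)^(p+1) : ℕ) : ℝ) = 2 * (2:ℝ)^p := by
    rw [pow2_cast, pow_succ]; ring
  have hP2 : (0:ℝ) < (2:ℝ)^p := by positivity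
  have hkey1 : 8 * (C1 ω)^2 ≤ (3 * C1 ω * ((2:ℝ)^(ω/2) + 1))^2 := by nlinarith [hc1, ht2]
  have hkey2 : 8 * (2:ℝ)^ω * (C1 ω)^2 ≤ (3 * C1 ω * ((2:ℝ)^(ω/2) + 1))^2 := by
    nlinarith [hc1, ht2, ht2sq, sq_nonneg ((2:ℝ)^(ω/2))]
  have hT : (0:ℝ) ≤ (2:ℝ)^ω := Real.rpow_nonneg (by norm_num) ω
  refine ⟨?_, fun x hx => hPbFS x hx, ?_, ?_⟩
  · -- mean zero
    rw [hPbFS.tsum_eq]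
    rw [Finset.sum_comm]
    refine Finset.sum_eq_zero fun mn hmn => ?_
    rw [← (hrad mn hmn).tsum_eq, conv_tsum_eq (hKfs mn.1) (hLfs mn.2), (hKb mn.1).1, zero_mul]
  · -- ℓ² bound
    have hl2A : ∑' x : ℤ, ‖A x‖^2 ≤ (C1 ω * DL)^2 * (DK^2 / ((2^p:ℕ):ℝ)) := by
      refine le_trans (mult_l2 hω hDL.le hLb (p+1) (2^p) (hKfs p)) ?_
      exact mul_le_mul_of_nonneg_left (hKb p).2.2.1 (by positivity)
    have hl2B : ∑' x : ℤ, ‖B x‖^2 ≤ (C1 ω * DK)^2 * (DL^2 / ((2^p:ℕ):ℝ)) := by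
      refine le_trans (mult_l2 hω hDK.le hKb p (2^p) (hLfs p)) ?_
      exact mul_le_mul_of_nonneg_left (hLb p).2.2.1 (by positivity)
    have hsum_eq : ∑' x : ℤ, ‖∑ mn ∈ fib (p+1), conv (Kb mn.1) (Lb mn.2) x‖^2
        = ∑' x : ℤ, ‖A x + B x‖^2 := tsum_congr fun x => by rw [hsplit x]
    rw [hsum_eq]
    calc ∑' x : ℤ, ‖A x + B x‖^2
        ≤ 2 * ∑' x : ℤ, ‖A x‖^2 + 2 * ∑' x : ℤ, ‖B x‖^2 := l2_add hAfs hBfs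
    _ ≤ 2 * ((C1 ω * DL)^2 * (DK^2 / ((2^p:ℕ):ℝ)))
        + 2 * ((C1 ω * DK)^2 * (DL^2 / ((2^p:ℕ):ℝ))) := by
        have h2A := mul_le_mul_of_nonneg_left hl2A (by norm_num : (0:ℝ) ≤ 2)
        have h2B := mul_le_mul_of_nonneg_left hl2B (by norm_num : (0:ℝ) ≤ 2)
        linarith
    _ ≤ (3 * C1 ω * ((2:ℝ)^(ω/2) + 1) * DK * DL)^2 / (((2:ℕ)^(p+1) : ℕ) : ℝ) := by
        rw [hcastp, hcastp1]
        exact arith1 hP2 hkey1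
  · -- Hölder bound
    intro h
    have hΔA : ∀ x, A (x+h) - A x = conv (fun t => Kb p (t+h) - Kb p t) MsumL x :=
      fun x => conv_delta hMLfs (Kb p) h x
    have hΔB : ∀ x, B (x+h) - B x = conv (fun t => Lb p (t+h) - Lb p t) MsumK x :=
      fun x => conv_delta hMKfs (Lb p) h x
    have hfsΔK : FS (fun t => Kb p (t+h) - Kb p t) (2^p + h.natAbs) := (hKfs p).delta h
    have hfsΔL : FS (fun t => Lb p (t+h) - Lb p t) (2^p + h.natAbs) := (hLfs p).delta h
    have hl2ΔA : ∑' x : ℤ, ‖A (x+h) - A x‖^2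
        ≤ (C1 ω * DL)^2 * (DK^2 / ((2^p:ℕ):ℝ) * ((((|h|:ℤ)):ℝ) / ((2^p:ℕ):ℝ))^ω) := by
      calc ∑' x : ℤ, ‖A (x+h) - A x‖^2
          = ∑' x : ℤ, ‖conv (fun t => Kb p (t+h) - Kb p t) MsumL x‖^2 :=
            tsum_congr fun x => by rw [hΔA x]
      _ ≤ (C1 ω * DL)^2 * ∑' x : ℤ, ‖Kb p (x+h) - Kb p x‖^2 :=
            mult_l2 hω hDL.le hLb (p+1) (2^p + h.natAbs) hfsΔK
      _ ≤ _ := mul_le_mul_of_nonneg_left ((hKb p).2.2.2 h) (by positivity)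
    have hl2ΔB : ∑' x : ℤ, ‖B (x+h) - B x‖^2
        ≤ (C1 ω * DK)^2 * (DL^2 / ((2^p:ℕ):ℝ) * ((((|h|:ℤ)):ℝ) / ((2^p:ℕ):ℝ))^ω) := by
      calc ∑' x : ℤ, ‖B (x+h) - B x‖^2
          = ∑' x : ℤ, ‖conv (fun t => Lb p (t+h) - Lb p t) MsumK x‖^2 :=
            tsum_congr fun x => by rw [hΔB x]
      _ ≤ (C1 ω * DK)^2 * ∑' x : ℤ, ‖Lb p (x+h) - Lb p x‖^2 :=
            mult_l2 hω hDK.le hKb p (2^p + h.natAbs) hfsΔL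
      _ ≤ _ := mul_le_mul_of_nonneg_left ((hLb p).2.2.2 h) (by positivity)
    have hgoal_eq : ∑' x : ℤ, ‖(∑ mn ∈ fib (p+1), conv (Kb mn.1) (Lb mn.2) (x+h))
          - ∑ mn ∈ fib (p+1), conv (Kb mn.1) (Lb mn.2) x‖^2
        = ∑' x : ℤ, ‖(A (x+h) - A x) + (B (x+h) - B x)‖^2 := by
      refine tsum_congr fun x => ?_
      have heq : (∑ mn ∈ fib (p+1), conv (Kb mn.1) (Lb mn.2) (x+h))
          - ∑ mn ∈ fib (p+1), conv (Kb mn.1) (Lb mn.2) x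
          = (A (x+h) - A x) + (B (x+h) - B x) := by
        rw [hsplit (x+h), hsplit x]; ring
      rw [heq]
    set X : ℝ := (((|h|:ℤ)):ℝ) with hXdef
    have hX0 : 0 ≤ X := by rw [hXdef]; exact_mod_cast abs_nonneg h
    have hXsplit : (X / ((2^p:ℕ):ℝ))^ω
        = (2:ℝ)^ω * (X / (((2:ℕ)^(p+1) : ℕ):ℝ))^ω := by
      rw [hcastp, hcastp1, ← Real.mul_rpow (by norm_num) (by positivity)]
      congr 1
      field_simp
    have hY0 : (0:ℝ) ≤ (X / (((2:ℕ)^(p+1) : ℕ):ℝ))^ω := Real.rpow_nonneg (by positivity) ω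
    calc ∑' x : ℤ, ‖(∑ mn ∈ fib (p+1), conv (Kb mn.1) (Lb mn.2) (x+h))
          - ∑ mn ∈ fib (p+1), conv (Kb mn.1) (Lb mn.2) x‖^2
        = ∑' x : ℤ, ‖(A (x+h) - A x) + (B (x+h) - B x)‖^2 := hgoal_eq
    _ ≤ 2 * ∑' x : ℤ, ‖A (x+h) - A x‖^2 + 2 * ∑' x : ℤ, ‖B (x+h) - B x‖^2 :=
        l2_add (hAfs.delta h) (hBfs.delta h)
    _ ≤ 2 * ((C1 ω * DL)^2 * (DK^2 / ((2^p:ℕ):ℝ)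
            * ((2:ℝ)^ω * (X / (((2:ℕ)^(p+1) : ℕ):ℝ))^ω)))
        + 2 * ((C1 ω * DK)^2 * (DL^2 / ((2^p:ℕ):ℝ)
            * ((2:ℝ)^ω * (X / (((2:ℕ)^(p+1) : ℕ):ℝ))^ω))) := by
        rw [← hXsplit]
        linarith [hl2ΔA, hl2ΔB]
    _ ≤ (3 * C1 ω * ((2:ℝ)^(ω/2) + 1) * DK * DL)^2 / (((2:ℕ)^(p+1) : ℕ):ℝ)
          * (X / (((2:ℕ)^(p+1) : ℕ):ℝ))^ω := by
        rw [hcastp, hcastp1]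
        exact arith2 hP2 (by rw [hcastp1] at hY0; exact hY0) hT hkey2

end CZaux

namespace CZaux

set_option maxHeartbeats 2000000 in
theorem main {ω : ℝ} (hω : 0 < ω) (J : ℕ) (DK DL : ℝ) (Kb Lb : ℕ → ℤ → ℂ)
    (hDK : 0 < DK) (hDL : 0 < DL)
    (hKJ : ∀ m, m < J → Kb m = 0) (hLJ : ∀ m, m < J → Lb m = 0)
    (hKb : ∀ m, IsCZBlock ω (2^m) DK (Kb m)) (hLb : ∀ m, IsCZBlock ω (2^m) DL (Lb m)) :
    ∃ Pb : ℕ → ℤ → ℂ,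
      (∀ m, m < J → Pb m = 0) ∧
      (∀ m, IsCZBlock ω (2^m) ((3 * C1 ω * ((2:ℝ)^(ω/2) + 1)) * DK * DL) (Pb m)) ∧
      ∀ x : ℤ,
        conv (fun y => ∑' m : ℕ, Kb m y) (fun y => ∑' m : ℕ, Lb m y) x
          = ∑' m : ℕ, Pb m x := by
  have hKfs : ∀ k, FS (Kb k) (2^k) := fun k => block_fs (hKb k)
  have hLfs : ∀ k, FS (Lb k) (2^k) := fun k => block_fs (hLb k)
  have hgK : Summable (fun m : ℕ => DK * w^m) :=
    (summable_geometric_of_lt_one w_pos.le w_lt_one).mul_left DK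
  have hgL : Summable (fun n : ℕ => DL * w^n) :=
    (summable_geometric_of_lt_one w_pos.le w_lt_one).mul_left DL
  have hprod_geo : Summable fun mn : ℕ × ℕ => (DK * w^mn.1) * (DL * w^mn.2) :=
    Summable.mul_of_nonneg hgK hgL
      (fun m => mul_nonneg hDK.le (pow_nonneg w_pos.le m))
      (fun n => mul_nonneg hDL.le (pow_nonneg w_pos.le n))
  refine ⟨fun p x => ∑ mn ∈ fib p, conv (Kb mn.1) (Lb mn.2) x, ?_, ?_, ?_⟩
  · -- vanishing below scale J
    intro m hm
    funext x
    show (∑ mn ∈ fib m, conv (Kb mn.1) (Lb mn.2) x) = 0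
    refine Finset.sum_eq_zero fun mn hmn => ?_
    have hmax := mem_fib.1 hmn
    have h1 : mn.1 < J := by have := le_max_left mn.1 mn.2; omega
    rw [hKJ mn.1 h1]
    exact conv_zero_left' (Lb mn.2) x
  · -- block property
    intro m
    cases m with
    | zero =>
      have hfib0 : fib 0 = (∅ : Finset (ℕ × ℕ)) := by
        simp [fib]
      have h0 : (fun x : ℤ => ∑ mn ∈ fib 0, conv (Kb mn.1) (Lb mn.2) x)
          = fun _ => (0 : ℂ) := by
        funext x; rw [hfib0, Finset.sum_empty]
      show IsCZBlock ω (2 ^ 0) (3 * C1 ω * ((2:ℝ) ^ (ω / 2) + 1) * DK * DL)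
        (fun x => ∑ mn ∈ fib 0, conv (Kb mn.1) (Lb mn.2) x)
      rw [h0]
      have hC : (0:ℝ) < 3 * C1 ω * ((2:ℝ)^(ω/2) + 1) * DK * DL := by
        have hc1 := C1_pos hω
        have ht2 : (0:ℝ) < (2:ℝ)^(ω/2) := Real.rpow_pos_of_pos (by norm_num) _
        positivity
      refine ⟨by rw [tsum_zero], fun x _ => rfl, ?_, ?_⟩
      · rw [show ∑' (_ : ℤ), ‖(0:ℂ)‖^2 = 0 by simp]
        positivity
      · intro h
        rw [show ∑' (_ : ℤ), ‖(0:ℂ) - 0‖^2 = 0 by simp]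
        positivity
    | succ p => exact pb_block hω hDK hDL hKb hLb p
  · -- the convolution identity
    intro x
    set u : ℕ × ℕ → ℤ → ℂ := fun mn y => Kb mn.1 (x - y) * Lb mn.2 y with hu
    set G : ℕ × ℕ → ℂ := fun mn => conv (Kb mn.1) (Lb mn.2) x with hG
    have hKnorm : ∀ z : ℤ, Summable fun m : ℕ => ‖Kb m z‖ := fun z =>
      Summable.of_nonneg_of_le (fun m => norm_nonneg _)
        (fun m => block_pointwise (hKb m) hDK.le z) hgK
    have hLnorm : ∀ z : ℤ, Summable fun n : ℕ => ‖Lb n z‖ := fun z =>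
      Summable.of_nonneg_of_le (fun n => norm_nonneg _)
        (fun n => block_pointwise (hLb n) hDL.le z) hgL
    have hu_slice_norm : ∀ mn : ℕ × ℕ, Summable fun y => ‖u mn y‖ := by
      intro mn
      refine summable_of_ne_finset_zero (s := Ic (2^mn.2)) (fun y hy => ?_)
      show ‖Kb mn.1 (x - y) * Lb mn.2 y‖ = 0
      rw [hLfs mn.2 y (not_mem_Ic.1 hy), mul_zero, norm_zero]
    have hsliceB : ∀ mn : ℕ × ℕ, ∑' y : ℤ, ‖u mn y‖ ≤ (DK * w^mn.1) * (DL * w^mn.2) :=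
      fun mn => slice_l1 (hKb mn.1) (hLb mn.2) hDK.le hDL.le x
    have hpt : ∀ (mn : ℕ × ℕ) (y : ℤ), ‖u mn y‖ ≤ (DK * w^mn.1) * (DL * w^mn.2) := by
      intro mn y
      show ‖Kb mn.1 (x - y) * Lb mn.2 y‖ ≤ _
      rw [norm_mul]
      exact mul_le_mul (block_pointwise (hKb mn.1) hDK.le _)
        (block_pointwise (hLb mn.2) hDL.le _) (norm_nonneg _)
        (mul_nonneg hDK.le (pow_nonneg w_pos.le _))
    have huncurry : Summable (Function.uncurry u) := by
      refine Summable.of_norm ?_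
      rw [summable_prod_of_nonneg (fun z => norm_nonneg _)]
      constructor
      · intro mn; exact hu_slice_norm mn
      · refine Summable.of_nonneg_of_le (fun mn => tsum_nonneg fun y => norm_nonneg _)
          (fun mn => hsliceB mn) hprod_geo
    have hu_slice : ∀ mn : ℕ × ℕ, Summable (u mn) := fun mn =>
      (hu_slice_norm mn).of_norm
    have hy_slice : ∀ y : ℤ, Summable fun mn : ℕ × ℕ => u mn y := fun y =>
      Summable.of_norm_bounded hprod_geo (fun mn => hpt mn y)
    have step2 : conv (fun y => ∑' m : ℕ, Kb m y) (fun y => ∑' m : ℕ, Lb m y) x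
        = ∑' y : ℤ, ∑' mn : ℕ × ℕ, u mn y := by
      show (∑' y : ℤ, (∑' m : ℕ, Kb m (x - y)) * (∑' m : ℕ, Lb m y))
          = ∑' y : ℤ, ∑' mn : ℕ × ℕ, u mn y
      exact tsum_congr fun y =>
        tsum_mul_tsum_of_summable_norm (hKnorm (x - y)) (hLnorm y)
    have step3 : ∑' y : ℤ, ∑' mn : ℕ × ℕ, u mn y = ∑' mn : ℕ × ℕ, ∑' y : ℤ, u mn y :=
      Summable.tsum_comm' huncurry hu_slice hy_slice
    have hGsum : Summable G := by
      refine Summable.of_norm_bounded hprod_geo (fun mn => ?_)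
      calc ‖G mn‖ ≤ ∑' y : ℤ, ‖u mn y‖ := norm_tsum_le_tsum_norm (hu_slice_norm mn)
      _ ≤ _ := hsliceB mn
    have hfib := hGsum.hasSum.tsum_fiberwise (fun mn => max mn.1 mn.2 + 1)
    have hfib_eq : ∀ p : ℕ,
        (∑' (b : ((fun mn : ℕ × ℕ => max mn.1 mn.2 + 1) ⁻¹' {p})), G b)
          = ∑ mn ∈ fib p, G mn := by
      intro p
      have hset : ((fun mn : ℕ × ℕ => max mn.1 mn.2 + 1) ⁻¹' {p}) = (fib p : Set (ℕ × ℕ)) := by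
        ext mn
        simp only [Set.mem_preimage, Set.mem_singleton_iff, Finset.mem_coe]
        exact (mem_fib (p := p) (mn := mn)).symm
      rw [hset]
      exact Finset.tsum_subtype' (fib p) G
    have hfib' : HasSum (fun p : ℕ => ∑ mn ∈ fib p, G mn) (∑' mn : ℕ × ℕ, G mn) := by
      simpa only [hfib_eq] using hfib
    calc conv (fun y => ∑' m : ℕ, Kb m y) (fun y => ∑' m : ℕ, Lb m y) x
        = ∑' y : ℤ, ∑' mn : ℕ × ℕ, u mn y := step2
    _ = ∑' mn : ℕ × ℕ, ∑' y : ℤ, u mn y := step3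
    _ = ∑' mn : ℕ × ℕ, G mn := rfl
    _ = ∑' p : ℕ, ∑ mn ∈ fib p, G mn := hfib'.tsum_eq.symm
    _ = _ := rfl

end CZaux


/-- the convolution of two CZ kernels made of blocks of dyadic scales
`≥ 2^J` is again such a CZ kernel, with `‖K * L‖_CZ ≤ C ‖K‖_CZ ‖L‖_CZ`,
`C` independent of `J`. -/
theorem stmt3 (ω : ℝ) (hω : 0 < ω) : ∃ C : ℝ, 0 < C ∧
    ∀ (J : ℕ) (DK DL : ℝ) (Kb Lb : ℕ → ℤ → ℂ),
    0 < DK → 0 < DL →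
    (∀ m, m < J → Kb m = 0) → (∀ m, m < J → Lb m = 0) →
    (∀ m, IsCZBlock ω (2 ^ m) DK (Kb m)) →
    (∀ m, IsCZBlock ω (2 ^ m) DL (Lb m)) →
    ∃ Pb : ℕ → ℤ → ℂ,
      (∀ m, m < J → Pb m = 0) ∧
      (∀ m, IsCZBlock ω (2 ^ m) (C * DK * DL) (Pb m)) ∧
      ∀ x : ℤ,
        conv (fun y => ∑' m : ℕ, Kb m y) (fun y => ∑' m : ℕ, Lb m y) x =
          ∑' m : ℕ, Pb m x := by
  refine ⟨3 * CZaux.C1 ω * ((2:ℝ) ^ (ω / 2) + 1), ?_, ?_⟩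
  · have hc1 := CZaux.C1_pos hω
    have ht2 : (0:ℝ) < (2:ℝ) ^ (ω / 2) := Real.rpow_pos_of_pos (by norm_num) _
    positivity
  · intro J DK DL Kb Lb hDK hDL hKJ hLJ hKb hLb
    exact CZaux.main hω J DK DL Kb Lb hDK hDL hKJ hLJ hKb hLb
end
end

section
/- Let ρ : ℤ → ℂ satisfy |ρ(x+h) − ρ(x)| ≤ (C/s)(|h|/s)^γ for some γ > 0, and let B = ∑_j B_j where the B_j are supported on disjoint dyadic intervals Q_j of common length 2^k ≤ s, each with ∑_{y∈Q_j} B_j(y) = 0 and ‖B_j‖_{ℓ¹} ≤ λ·2^k. Assume ρ is supported in [−Cs, Cs]. Then for every x, |(ρ * B)(x)| ≤ C'·λ·(2^k/s)^γ, where C' depends only on C and γ. -/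
/-- Partition a long interval sum into blocks of length `m`. -/
lemma sum_blocks (m : ℤ) (hm : 0 < m) (f : ℤ → ℂ) (a : ℤ) :
    ∀ b : ℤ, a ≤ b → ∑ y ∈ Finset.Ico (a * m) (b * m), f y
      = ∑ q ∈ Finset.Ico a b, ∑ y ∈ Finset.Ico (q * m) ((q + 1) * m), f y := by
  have key : ∀ n : ℕ, ∑ y ∈ Finset.Ico (a * m) ((a + n) * m), f y
      = ∑ q ∈ Finset.Ico a (a + n), ∑ y ∈ Finset.Ico (q * m) ((q + 1) * m), f y := by
    intro n
    induction n with
    | zero => simp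
    | succ n ih =>
      have hle : a ≤ a + (n : ℤ) := le_add_of_nonneg_right (Int.natCast_nonneg n)
      have h1 : a * m ≤ (a + (n : ℤ)) * m := mul_le_mul_of_nonneg_right hle hm.le
      have h2 : (a + (n : ℤ)) * m ≤ (a + (n : ℤ) + 1) * m := by nlinarith
      have e : (a + ((n + 1 : ℕ) : ℤ)) = a + (n : ℤ) + 1 := by push_cast; ring
      rw [e, ← Finset.Ico_union_Ico_eq_Ico h1 h2,
        Finset.sum_union (Finset.Ico_disjoint_Ico_consecutive _ _ _), ih]
      have hins : Finset.Ico a (a + (n : ℤ) + 1) = insert (a + (n : ℤ)) (Finset.Ico a (a + (n : ℤ))) := by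
        ext y; simp only [Finset.mem_Ico, Finset.mem_insert]; omega
      rw [hins, Finset.sum_insert (by simp), add_comm]
  intro b hb
  have h := key (b - a).toNat
  rw [show a + ((b - a).toNat : ℤ) = b by omega] at h
  exact h

/-- smoothing estimate. If `ρ` is Hölder at scale `s` and supported in
`[-Cs, Cs]`, and `B` is a sum of mean-zero pieces on disjoint dyadic intervals of
length `2^k ≤ s` with ℓ¹ norms ≤ `λ·2^k`, then `|(ρ * B)(x)| ≤ C'·λ·(2^k/s)^γ`. -/
theorem stmt15 (C γ : ℝ) (hC : 0 < C) (hγ : 0 < γ) : ∃ C' : ℝ, 0 < C' ∧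
    ∀ (s lam : ℝ) (k : ℕ) (ρ B : ℤ → ℂ),
    1 ≤ s → 0 < lam → (2 : ℝ) ^ k ≤ s →
    (∀ x h : ℤ, ‖ρ (x + h) - ρ x‖ ≤ C / s * (((|h| : ℤ) : ℝ) / s) ^ γ) →
    (∀ x : ℤ, C * s < ((|x| : ℤ) : ℝ) → ρ x = 0) →
    (∀ q : ℤ, (∑ y ∈ Finset.Ico (q * 2 ^ k) ((q + 1) * 2 ^ k), B y) = 0) →
    (∀ q : ℤ, (∑ y ∈ Finset.Ico (q * 2 ^ k) ((q + 1) * 2 ^ k), ‖B y‖) ≤ lam * 2 ^ k) →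
    ∀ x : ℤ, ‖conv ρ B x‖ ≤ C' * lam * ((2 : ℝ) ^ k / s) ^ γ := by
  refine ⟨C * (2 * C + 4), by positivity, ?_⟩
  intro s lam k ρ B hs hlam hks hρ hsupp hmean hl1 x
  set m : ℤ := 2 ^ k with hm
  have hm0 : (0 : ℤ) < m := by positivity
  have hs0 : (0 : ℝ) < s := lt_of_lt_of_le one_pos hs
  have hmr : ((m : ℤ) : ℝ) = (2 : ℝ) ^ k := by push_cast [hm]; ring
  set N : ℤ := ⌈C * s⌉ with hN
  have hNr : C * s ≤ (N : ℝ) := Int.le_ceil _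
  have hNr2 : (N : ℝ) < C * s + 1 := Int.ceil_lt_add_one _
  have hN0 : 0 ≤ N := by
    have : (0 : ℝ) ≤ (N : ℝ) := le_trans (by positivity) hNr
    exact_mod_cast this
  set q0 : ℤ := (x - N) / m with hq0
  set q1 : ℤ := (x + N) / m with hq1
  have hq0le : q0 * m ≤ x - N := Int.ediv_mul_le _ (by omega)
  have hq1le : q1 * m ≤ x + N := Int.ediv_mul_le _ (by omega)
  have hq0lt : x - N < (q0 + 1) * m := Int.lt_ediv_add_one_mul_self _ hm0
  have hq1lt : x + N < (q1 + 1) * m := Int.lt_ediv_add_one_mul_self _ hm0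
  have hq01 : q0 ≤ q1 := Int.ediv_le_ediv hm0 (by omega)
  -- the summand is supported on the big interval
  have hsupp' : ∀ y ∉ Finset.Ico (q0 * m) ((q1 + 1) * m), ρ (x - y) * B y = 0 := by
    intro y hy
    simp only [Finset.mem_Ico, not_and_or, not_le, not_lt] at hy
    have hz : ρ (x - y) = 0 := by
      apply hsupp
      have habs : N + 1 ≤ |x - y| := by
        rcases hy with h | h
        · exact le_abs.2 (Or.inl (by omega))
        · exact le_abs.2 (Or.inr (by omega))
      calc C * s < (N : ℝ) + 1 := by linarith
        _ ≤ ((|x - y| : ℤ) : ℝ) := by exact_mod_cast habs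
    rw [hz, zero_mul]
  have hconv : conv ρ B x = ∑ q ∈ Finset.Ico q0 (q1 + 1),
      ∑ y ∈ Finset.Ico (q * m) ((q + 1) * m), ρ (x - y) * B y := by
    rw [conv, tsum_eq_sum hsupp', sum_blocks m hm0 _ q0 (q1 + 1) (by omega)]
  -- bound each block
  have hK0 : (0 : ℝ) ≤ C / s * ((2 : ℝ) ^ k / s) ^ γ := by positivity
  have inner : ∀ q : ℤ, ‖∑ y ∈ Finset.Ico (q * m) ((q + 1) * m), ρ (x - y) * B y‖
      ≤ C / s * ((2 : ℝ) ^ k / s) ^ γ * (lam * 2 ^ k) := by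
    intro q
    have hz : ∑ y ∈ Finset.Ico (q * m) ((q + 1) * m), ρ (x - q * m) * B y = 0 := by
      rw [← Finset.mul_sum, hmean q, mul_zero]
    have hrw : ∑ y ∈ Finset.Ico (q * m) ((q + 1) * m), ρ (x - y) * B y
        = ∑ y ∈ Finset.Ico (q * m) ((q + 1) * m), (ρ (x - y) - ρ (x - q * m)) * B y := by
      simp only [sub_mul, Finset.sum_sub_distrib, hz, sub_zero]
    rw [hrw]
    calc ‖∑ y ∈ Finset.Ico (q * m) ((q + 1) * m), (ρ (x - y) - ρ (x - q * m)) * B y‖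
        ≤ ∑ y ∈ Finset.Ico (q * m) ((q + 1) * m), ‖(ρ (x - y) - ρ (x - q * m)) * B y‖ :=
          norm_sum_le _ _
      _ ≤ ∑ y ∈ Finset.Ico (q * m) ((q + 1) * m),
          (C / s * ((2 : ℝ) ^ k / s) ^ γ) * ‖B y‖ := by
          apply Finset.sum_le_sum
          intro y hy
          rw [norm_mul]
          apply mul_le_mul_of_nonneg_right _ (norm_nonneg _)
          have h1 := hρ (x - y) (y - q * m)
          have e : x - y + (y - q * m) = x - q * m := by ring
          rw [e] at h1
          rw [norm_sub_rev]
          refine h1.trans ?_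
          apply mul_le_mul_of_nonneg_left _ (by positivity)
          apply Real.rpow_le_rpow (by positivity) ?_ hγ.le
          rw [Finset.mem_Ico] at hy
          have hqq : (q + 1) * m = q * m + m := by ring
          have habs : |y - q * m| ≤ m := abs_le.2 ⟨by omega, by omega⟩
          have habsR : ((|y - q * m| : ℤ) : ℝ) ≤ (2 : ℝ) ^ k := by
            rw [← hmr]; exact_mod_cast habs
          gcongr
      _ = (C / s * ((2 : ℝ) ^ k / s) ^ γ) *
          ∑ y ∈ Finset.Ico (q * m) ((q + 1) * m), ‖B y‖ := by
          rw [← Finset.mul_sum]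
      _ ≤ C / s * ((2 : ℝ) ^ k / s) ^ γ * (lam * 2 ^ k) :=
          mul_le_mul_of_nonneg_left (hl1 q) hK0
  -- count the blocks
  have hcount : (q1 + 1 - q0) * m ≤ 2 * N + 2 * m := by nlinarith [hq1le, hq0lt]
  have hcR : ((q1 + 1 - q0 : ℤ) : ℝ) * (2 : ℝ) ^ k ≤ (2 * C + 4) * s := by
    have h2 : ((q1 + 1 - q0 : ℤ) : ℝ) * ((m : ℤ) : ℝ) ≤ 2 * (N : ℝ) + 2 * ((m : ℤ) : ℝ) := by
      exact_mod_cast hcount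
    rw [hmr] at h2
    nlinarith [hNr2, hks, hs]
  have hcard : (((Finset.Ico q0 (q1 + 1)).card : ℕ) : ℝ) = ((q1 + 1 - q0 : ℤ) : ℝ) := by
    have h0 : (0 : ℤ) ≤ q1 + 1 - q0 := by omega
    rw [Int.card_Ico]
    exact_mod_cast congrArg (Int.cast : ℤ → ℝ) (Int.toNat_of_nonneg h0)
  rw [hconv]
  calc ‖∑ q ∈ Finset.Ico q0 (q1 + 1),
        ∑ y ∈ Finset.Ico (q * m) ((q + 1) * m), ρ (x - y) * B y‖
      ≤ ∑ q ∈ Finset.Ico q0 (q1 + 1),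
        ‖∑ y ∈ Finset.Ico (q * m) ((q + 1) * m), ρ (x - y) * B y‖ := norm_sum_le _ _
    _ ≤ ∑ _q ∈ Finset.Ico q0 (q1 + 1), C / s * ((2 : ℝ) ^ k / s) ^ γ * (lam * 2 ^ k) :=
        Finset.sum_le_sum fun q _ => inner q
    _ = (((Finset.Ico q0 (q1 + 1)).card : ℕ) : ℝ)
        * (C / s * ((2 : ℝ) ^ k / s) ^ γ * (lam * 2 ^ k)) := by
        rw [Finset.sum_const, nsmul_eq_mul]
    _ = (C / s * ((2 : ℝ) ^ k / s) ^ γ * lam)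
        * (((q1 + 1 - q0 : ℤ) : ℝ) * (2 : ℝ) ^ k) := by rw [hcard]; ring
    _ ≤ (C / s * ((2 : ℝ) ^ k / s) ^ γ * lam) * ((2 * C + 4) * s) := by
        apply mul_le_mul_of_nonneg_left hcR (by positivity)
    _ = C * (2 * C + 4) * lam * ((2 : ℝ) ^ k / s) ^ γ := by
        field_simp
end

section
/- With the hypotheses of the previous smoothing estimate, the bilinear bound holds: ∑_{s dyadic, 2^k ≤ s ≤ M} |⟨ρ_{s,s} * B_k^{(s)}, B_k^{(s)}⟩| ≤ C λ ∑_{s dyadic, s ≥ 2^k} (2^k/s)^γ ‖B_k^{(s)}‖_{ℓ¹} ≤ C' λ ‖B_k‖_{ℓ¹}, where for each s, ρ_{s,s} satisfies |ρ_{s,s}(x+h) − ρ_{s,s}(x)| ≤ (C/s)(|h|/s)^γ and supp ρ_{s,s} ⊂ [−Cs, Cs], and B_k^{(s)} is a sum of mean-zero pieces supported on disjoint dyadic intervals of length 2^k with ℓ¹ norms ≤ Cλ2^k each, with ‖B_k^{(s)}‖_{ℓ¹} ≤ ‖B_k‖_{ℓ¹}. -/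
/-- ℓ² pairing `⟨f, g⟩ = ∑_x f(x) conj(g(x))`. -/
noncomputable def pairing (f g : ℤ → ℂ) : ℂ := ∑' x : ℤ, f x * (starRingEnd ℂ) (g x)

private lemma sum_Ico_consecutiveZ (f : ℤ → ℂ) {a b c : ℤ} (h1 : a ≤ b) (h2 : b ≤ c) :
    ∑ i ∈ Finset.Ico a b, f i + ∑ i ∈ Finset.Ico b c, f i = ∑ i ∈ Finset.Ico a c, f i := by
  rw [← Finset.sum_union (Finset.Ico_disjoint_Ico_consecutive a b c),
    Finset.Ico_union_Ico_eq_Ico h1 h2]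

private lemma sum_Ico_blocks (f : ℤ → ℂ) {K : ℤ} (hK : 0 < K) (a : ℤ) (m : ℕ) :
    ∑ y ∈ Finset.Ico (a * K) ((a + (m : ℤ)) * K), f y
      = ∑ q ∈ Finset.Ico a (a + (m : ℤ)), ∑ y ∈ Finset.Ico (q * K) ((q + 1) * K), f y := by
  induction m with
  | zero => simp
  | succ m ih =>
      have hle : a ≤ a + (m : ℤ) := le_add_of_nonneg_right (Int.natCast_nonneg m)
      have h1 : a * K ≤ (a + (m : ℤ)) * K := mul_le_mul_of_nonneg_right hle hK.le
      have h2 : (a + (m : ℤ)) * K ≤ (a + (m : ℤ) + 1) * K :=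
        mul_le_mul_of_nonneg_right (by linarith) hK.le
      have hcast : a + ((m + 1 : ℕ) : ℤ) = (a + (m : ℤ)) + 1 := by push_cast; ring
      rw [hcast, ← sum_Ico_consecutiveZ f h1 h2, ih]
      have hq : ∑ q ∈ Finset.Ico a (a + (m : ℤ) + 1), ∑ y ∈ Finset.Ico (q * K) ((q + 1) * K), f y
          = (∑ q ∈ Finset.Ico a (a + (m : ℤ)), ∑ y ∈ Finset.Ico (q * K) ((q + 1) * K), f y)
            + ∑ y ∈ Finset.Ico ((a + (m : ℤ)) * K) ((a + (m : ℤ) + 1) * K), f y := by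
        have hins : Finset.Ico a (a + (m : ℤ) + 1)
            = insert (a + (m : ℤ)) (Finset.Ico a (a + (m : ℤ))) := by
          ext z; simp [Finset.mem_Ico]
        rw [hins, Finset.sum_insert (by simp [Finset.mem_Ico])]
        ring
      rw [hq]

private lemma conv_sup_bound
    (C γ lam : ℝ) (hC : 0 < C) (hγ : 0 < γ) (hlam : 0 < lam)
    (k n : ℕ) (hkn : k ≤ n) (ρ B : ℤ → ℂ)
    (hρ : ∀ (x h : ℤ), ‖ρ (x + h) - ρ x‖ ≤ C / 2 ^ n * (((|h| : ℤ) : ℝ) / 2 ^ n) ^ γ)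
    (hsupp : ∀ (x : ℤ), C * 2 ^ n < ((|x| : ℤ) : ℝ) → ρ x = 0)
    (hmz : ∀ (q : ℤ), (∑ y ∈ Finset.Ico (q * 2 ^ k) ((q + 1) * 2 ^ k), B y) = 0)
    (hbl : ∀ (q : ℤ), (∑ y ∈ Finset.Ico (q * 2 ^ k) ((q + 1) * 2 ^ k), ‖B y‖) ≤ C * lam * 2 ^ k)
    (x : ℤ) :
    ‖conv ρ B x‖ ≤ (2 * C + 4) * C ^ 2 * lam * ((2 : ℝ) ^ k / 2 ^ n) ^ γ := by
  set K : ℤ := 2 ^ k with hKdef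
  have hK : (0 : ℤ) < K := by positivity
  have hKR : ((K : ℤ) : ℝ) = 2 ^ k := by push_cast [hKdef]; norm_num
  set N : ℤ := ⌈C * 2 ^ n⌉ with hNdef
  have hCN : C * 2 ^ n ≤ (N : ℝ) := Int.le_ceil _
  have hN0 : (0 : ℤ) ≤ N := by
    have h0 : (0 : ℝ) ≤ (N : ℝ) := le_trans (by positivity) hCN
    exact_mod_cast h0
  have hNlt : (N : ℝ) < C * 2 ^ n + 1 := Int.ceil_lt_add_one _
  set q0 : ℤ := (x - N) / K with hq0def
  set q1 : ℤ := (x + N) / K + 1 with hq1def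
  have hdiv : ∀ a : ℤ, (a / K) * K ≤ a ∧ a < (a / K + 1) * K := by
    intro a
    have h1 := Int.mul_ediv_add_emod a K
    have h2 := Int.emod_nonneg a (ne_of_gt hK)
    have h3 := Int.emod_lt_of_pos a hK
    constructor <;> nlinarith [h1, h2, h3]
  have hq0le : q0 * K ≤ x - N := (hdiv (x - N)).1
  have hq0gt : x - N < (q0 + 1) * K := (hdiv (x - N)).2
  have hq1le : (q1 - 1) * K ≤ x + N := by
    have h1 := (hdiv (x + N)).1
    have : q1 - 1 = (x + N) / K := by rw [hq1def]; ring
    rw [this]; exact h1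
  have hq1gt : x + N < q1 * K := by
    have h2 := (hdiv (x + N)).2
    rw [hq1def]; exact h2
  have hq01 : q0 < q1 := by
    have hlt : q0 * K < q1 * K := by linarith
    exact lt_of_mul_lt_mul_right hlt hK.le
  set m : ℕ := (q1 - q0).toNat with hmdef
  have hm : q0 + (m : ℤ) = q1 := by
    rw [hmdef, Int.toNat_of_nonneg (by linarith)]; ring
  -- the summand vanishes outside the big interval
  have hvanish : ∀ y : ℤ, y ∉ Finset.Ico (q0 * K) (q1 * K) → ρ (x - y) * B y = 0 := by
    intro y hy
    rw [Finset.mem_Ico] at hy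
    push_neg at hy
    have hzero : ρ (x - y) = 0 := by
      apply hsupp
      have habs : N < |x - y| := by
        rcases lt_or_ge y (q0 * K) with h | h
        · have h5 : N + 1 ≤ x - y := by linarith [hq0le]
          rw [abs_of_pos (by linarith)]; linarith
        · have h6 := hy h
          have h5 : N + 1 ≤ y - x := by linarith [hq1gt]
          rw [abs_of_neg (by linarith)]; linarith
      calc C * 2 ^ n ≤ (N : ℝ) := hCN
        _ < ((|x - y| : ℤ) : ℝ) := by exact_mod_cast habs
    rw [hzero, zero_mul]
  have hconv_eq : conv ρ B x = ∑ y ∈ Finset.Ico (q0 * K) (q1 * K), ρ (x - y) * B y := by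
    simp only [conv]
    exact tsum_eq_sum hvanish
  -- block bound
  set t : ℝ := ((2 : ℝ) ^ k / 2 ^ n) ^ γ with htdef
  have ht0 : 0 ≤ t := by positivity
  have hblock : ∀ q : ℤ, ‖∑ y ∈ Finset.Ico (q * K) ((q + 1) * K), ρ (x - y) * B y‖
      ≤ (C / 2 ^ n * t) * (C * lam * 2 ^ k) := by
    intro q
    have hrw : ∑ y ∈ Finset.Ico (q * K) ((q + 1) * K), ρ (x - y) * B y
        = ∑ y ∈ Finset.Ico (q * K) ((q + 1) * K), (ρ (x - y) - ρ (x - q * K)) * B y := by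
      have hsplit : ∑ y ∈ Finset.Ico (q * K) ((q + 1) * K), ρ (x - y) * B y
          = (∑ y ∈ Finset.Ico (q * K) ((q + 1) * K), (ρ (x - y) - ρ (x - q * K)) * B y)
            + ρ (x - q * K) * ∑ y ∈ Finset.Ico (q * K) ((q + 1) * K), B y := by
        rw [Finset.mul_sum, ← Finset.sum_add_distrib]
        apply Finset.sum_congr rfl
        intro y _; ring
      rw [hsplit, hmz q, mul_zero, add_zero]
    rw [hrw]
    calc ‖∑ y ∈ Finset.Ico (q * K) ((q + 1) * K), (ρ (x - y) - ρ (x - q * K)) * B y‖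
        ≤ ∑ y ∈ Finset.Ico (q * K) ((q + 1) * K), ‖(ρ (x - y) - ρ (x - q * K)) * B y‖ :=
          norm_sum_le _ _
      _ ≤ ∑ y ∈ Finset.Ico (q * K) ((q + 1) * K), (C / 2 ^ n * t) * ‖B y‖ := by
          apply Finset.sum_le_sum
          intro y hy
          rw [norm_mul]
          apply mul_le_mul_of_nonneg_right _ (norm_nonneg _)
          have hx' : x - y = (x - q * K) + (q * K - y) := by ring
          rw [hx']
          refine (hρ (x - q * K) (q * K - y)).trans ?_
          apply mul_le_mul_of_nonneg_left _ (by positivity)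
          rw [htdef]
          apply Real.rpow_le_rpow (by positivity) _ hγ.le
          apply div_le_div_of_nonneg_right ?_ (by positivity)
          · rw [← hKR]
            have hmem := Finset.mem_Ico.1 hy
            have habs : |q * K - y| ≤ K := by
              rw [abs_le]
              constructor
              · nlinarith [hmem.2]
              · linarith [hmem.1]
            exact_mod_cast habs
      _ = (C / 2 ^ n * t) * ∑ y ∈ Finset.Ico (q * K) ((q + 1) * K), ‖B y‖ := by
          rw [Finset.mul_sum]
      _ ≤ (C / 2 ^ n * t) * (C * lam * 2 ^ k) :=
          mul_le_mul_of_nonneg_left (hbl q) (by positivity)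
  -- count of blocks
  have hmK : (m : ℝ) * ((K : ℤ) : ℝ) ≤ (2 * C + 4) * 2 ^ n := by
    have hc1 : ((q0 : ℝ) + 1) * (K : ℝ) > (x : ℝ) - (N : ℝ) := by exact_mod_cast hq0gt
    have hc2 : ((q1 : ℝ) - 1) * (K : ℝ) ≤ (x : ℝ) + (N : ℝ) := by exact_mod_cast hq1le
    have hmR : (m : ℝ) = (q1 : ℝ) - (q0 : ℝ) := by
      have := hm
      have h' : (q0 : ℝ) + (m : ℝ) = (q1 : ℝ) := by exact_mod_cast congrArg (fun z : ℤ => (z : ℝ)) this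
      linarith
    have hKpow : ((K : ℤ) : ℝ) = (2 : ℝ) ^ k := hKR
    have hkn' : (2 : ℝ) ^ k ≤ (2 : ℝ) ^ n := pow_le_pow_right₀ (by norm_num) hkn
    have h2n : (1 : ℝ) ≤ (2 : ℝ) ^ n := one_le_pow₀ (by norm_num)
    -- m*K = (q1-q0)*K ≤ 2N + 2K
    have hstep : (m : ℝ) * ((K : ℤ) : ℝ) ≤ 2 * (N : ℝ) + 2 * ((K : ℤ) : ℝ) := by
      rw [hmR]; nlinarith
    have hNb : (N : ℝ) ≤ (C + 1) * 2 ^ n := by nlinarith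
    rw [hKpow] at hstep ⊢
    nlinarith
  -- put it together
  have hq1K : q1 * K = (q0 + (m : ℤ)) * K := by rw [hm]
  rw [hconv_eq, hq1K, sum_Ico_blocks _ hK q0 m]
  calc ‖∑ q ∈ Finset.Ico q0 (q0 + (m : ℤ)), ∑ y ∈ Finset.Ico (q * K) ((q + 1) * K),
          ρ (x - y) * B y‖
      ≤ ∑ q ∈ Finset.Ico q0 (q0 + (m : ℤ)), ‖∑ y ∈ Finset.Ico (q * K) ((q + 1) * K),
          ρ (x - y) * B y‖ := norm_sum_le _ _
    _ ≤ (Finset.Ico q0 (q0 + (m : ℤ))).card • ((C / 2 ^ n * t) * (C * lam * 2 ^ k)) :=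
        Finset.sum_le_card_nsmul _ _ _ (fun q _ => hblock q)
    _ = (m : ℝ) * ((C / 2 ^ n * t) * (C * lam * 2 ^ k)) := by
        rw [Int.card_Ico]
        simp [nsmul_eq_mul]
    _ = ((m : ℝ) * ((K : ℤ) : ℝ)) * (C ^ 2 * lam * t) / 2 ^ n := by
        rw [hKR]; ring
    _ ≤ ((2 * C + 4) * 2 ^ n) * (C ^ 2 * lam * t) / 2 ^ n := by gcongr
    _ = (2 * C + 4) * C ^ 2 * lam * t := by field_simp

private lemma tsum_shift_geom (k : ℕ) {r : ℝ} (hr0 : 0 ≤ r) (hr1 : r < 1) :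
    ∑' n : ℕ, (if k ≤ n then r ^ (n - k) else 0) = (1 - r)⁻¹ := by
  have hinj : Function.Injective (fun m : ℕ => k + m) := add_right_injective k
  have hsupp : Function.support (fun n : ℕ => if k ≤ n then r ^ (n - k) else 0)
      ⊆ Set.range (fun m : ℕ => k + m) := by
    intro z hz
    by_cases h : k ≤ z
    · exact ⟨z - k, show k + (z - k) = z by omega⟩
    · simp [h] at hz
  have heq := hinj.tsum_eq (f := fun n : ℕ => if k ≤ n then r ^ (n - k) else 0) hsupp
  rw [← heq]
  have hterm : ∀ m : ℕ, (if k ≤ k + m then r ^ (k + m - k) else 0) = r ^ m := by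
    intro m
    rw [if_pos (by omega)]
    congr 1
    omega
  calc ∑' m : ℕ, (if k ≤ k + m then r ^ (k + m - k) else 0)
      = ∑' m : ℕ, r ^ m := tsum_congr hterm
    _ = (1 - r)⁻¹ := tsum_geometric_of_lt_one hr0 hr1

/-- the bilinear bound
`∑_{s dyadic, 2^k ≤ s ≤ M} |⟨ρ_{s,s} * B_k^{(s)}, B_k^{(s)}⟩|
  ≤ Cλ ∑_{s ≥ 2^k} (2^k/s)^γ ‖B_k^{(s)}‖₁ ≤ C'λ ‖B_k‖₁`. -/
theorem stmt16 (C γ : ℝ) (hC : 0 < C) (hγ : 0 < γ) : ∃ C' : ℝ, 0 < C' ∧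
    ∀ (lam M : ℝ) (k : ℕ) (ρ : ℕ → ℤ → ℂ) (Bs : ℕ → ℤ → ℂ) (Bk : ℤ → ℂ),
    0 < lam → 1 ≤ M →
    (∀ n (x h : ℤ), ‖ρ n (x + h) - ρ n x‖ ≤ C / 2 ^ n * (((|h| : ℤ) : ℝ) / 2 ^ n) ^ γ) →
    (∀ n (x : ℤ), C * 2 ^ n < ((|x| : ℤ) : ℝ) → ρ n x = 0) →
    (∀ n (q : ℤ), (∑ y ∈ Finset.Ico (q * 2 ^ k) ((q + 1) * 2 ^ k), Bs n y) = 0) →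
    (∀ n (q : ℤ), (∑ y ∈ Finset.Ico (q * 2 ^ k) ((q + 1) * 2 ^ k), ‖Bs n y‖) ≤
      C * lam * 2 ^ k) →
    (∀ n, Summable fun x : ℤ => ‖Bs n x‖) →
    (Summable fun x : ℤ => ‖Bk x‖) →
    (∀ n, (∑' x : ℤ, ‖Bs n x‖) ≤ ∑' x : ℤ, ‖Bk x‖) →
    (∑' n : ℕ, if (2 : ℝ) ^ k ≤ 2 ^ n ∧ ((2 : ℝ) ^ n ≤ M) then
          ‖pairing (conv (ρ n) (Bs n)) (Bs n)‖ else 0) ≤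
        C' * lam * ∑' n : ℕ,
          (if k ≤ n then ((2 : ℝ) ^ k / 2 ^ n) ^ γ * ∑' x : ℤ, ‖Bs n x‖ else 0) ∧
      (∑' n : ℕ, if (2 : ℝ) ^ k ≤ 2 ^ n ∧ ((2 : ℝ) ^ n ≤ M) then
          ‖pairing (conv (ρ n) (Bs n)) (Bs n)‖ else 0) ≤
        C' * lam * ∑' x : ℤ, ‖Bk x‖ := by
  have hr0 : (0 : ℝ) < (1 / 2 : ℝ) ^ γ := Real.rpow_pos_of_pos (by norm_num) γ
  have hr1 : (1 / 2 : ℝ) ^ γ < 1 := Real.rpow_lt_one (by norm_num) (by norm_num) hγ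
  set r : ℝ := (1 / 2 : ℝ) ^ γ with hrdef
  have h1r : 0 < 1 - r := by linarith
  set A : ℝ := (2 * C + 4) * C ^ 2 with hAdef
  have hA : 0 < A := by positivity
  refine ⟨A * (1 + (1 - r)⁻¹), by positivity, ?_⟩
  intro lam M k ρ Bs Bk hlam hM hρ hsupp hmz hbl hsumBs hsumBk hBsle
  have hBk0 : 0 ≤ ∑' x : ℤ, ‖Bk x‖ := tsum_nonneg fun _ => norm_nonneg _
  set f : ℕ → ℝ := fun n => if (2 : ℝ) ^ k ≤ 2 ^ n ∧ ((2 : ℝ) ^ n ≤ M) then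
    ‖pairing (conv (ρ n) (Bs n)) (Bs n)‖ else 0 with hfdef
  set g : ℕ → ℝ := fun n => if k ≤ n then ((2 : ℝ) ^ k / 2 ^ n) ^ γ * ∑' x : ℤ, ‖Bs n x‖
    else 0 with hgdef
  have hg0 : ∀ n, 0 ≤ g n := by
    intro n
    rw [hgdef]
    dsimp only
    split_ifs
    · have : 0 ≤ ∑' x : ℤ, ‖Bs n x‖ := tsum_nonneg (fun x : ℤ => norm_nonneg (Bs n x))
      positivity
    · exact le_rfl
  have hratio : ∀ n, k ≤ n → ((2 : ℝ) ^ k / 2 ^ n) ^ γ = r ^ (n - k) := by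
    intro n hkn
    have h1 : (2 : ℝ) ^ k / 2 ^ n = (1 / 2 : ℝ) ^ (n - k) := by
      rw [div_eq_iff (by positivity : ((2 : ℝ) ^ n) ≠ 0)]
      rw [one_div, inv_pow, inv_mul_eq_div, eq_div_iff (by positivity : ((2 : ℝ) ^ (n - k)) ≠ 0)]
      rw [← pow_add]
      congr 1
      omega
    rw [h1, hrdef, ← Real.rpow_natCast (1 / 2 : ℝ) (n - k),
      ← Real.rpow_mul (by norm_num), mul_comm ((n - k : ℕ) : ℝ) γ,
      Real.rpow_mul (by norm_num), Real.rpow_natCast]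
  -- key per-term bound
  have key : ∀ n, f n ≤ A * lam * g n := by
    intro n
    by_cases hcond : (2 : ℝ) ^ k ≤ 2 ^ n ∧ ((2 : ℝ) ^ n ≤ M)
    · have hkn : k ≤ n := by
        have := hcond.1
        exact (pow_le_pow_iff_right₀ (by norm_num : (1 : ℝ) < 2)).1 this
      have hf_eq : f n = ‖pairing (conv (ρ n) (Bs n)) (Bs n)‖ := by
        rw [hfdef]; exact if_pos hcond
      have hg_eq : g n = ((2 : ℝ) ^ k / 2 ^ n) ^ γ * ∑' x : ℤ, ‖Bs n x‖ := by
        rw [hgdef]; exact if_pos hkn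
      rw [hf_eq, hg_eq]
      set D : ℝ := A * lam * ((2 : ℝ) ^ k / 2 ^ n) ^ γ with hDdef
      have hD0 : 0 ≤ D := by positivity
      have hsup : ∀ x : ℤ, ‖conv (ρ n) (Bs n) x‖ ≤ D := by
        intro x
        refine (conv_sup_bound C γ lam hC hγ hlam k n hkn (ρ n) (Bs n)
          (hρ n) (hsupp n) (hmz n) (hbl n) x).trans (le_of_eq ?_)
        simp only [hDdef, hAdef]
        all_goals ring
      have hptle : ∀ x : ℤ, ‖conv (ρ n) (Bs n) x * (starRingEnd ℂ) (Bs n x)‖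
          ≤ D * ‖Bs n x‖ := by
        intro x
        rw [norm_mul, RCLike.norm_conj]
        exact mul_le_mul_of_nonneg_right (hsup x) (norm_nonneg _)
      have hsummable : Summable (fun x : ℤ => ‖conv (ρ n) (Bs n) x * (starRingEnd ℂ) (Bs n x)‖) :=
        Summable.of_nonneg_of_le (fun x => norm_nonneg _) hptle ((hsumBs n).mul_left D)
      calc ‖pairing (conv (ρ n) (Bs n)) (Bs n)‖
          ≤ ∑' x : ℤ, ‖conv (ρ n) (Bs n) x * (starRingEnd ℂ) (Bs n x)‖ := by
            rw [pairing]
            exact norm_tsum_le_tsum_norm hsummable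
        _ ≤ ∑' x : ℤ, D * ‖Bs n x‖ :=
            Summable.tsum_le_tsum hptle hsummable ((hsumBs n).mul_left D)
        _ = D * ∑' x : ℤ, ‖Bs n x‖ := tsum_mul_left
        _ = A * lam * (((2 : ℝ) ^ k / 2 ^ n) ^ γ * ∑' x : ℤ, ‖Bs n x‖) := by
            rw [hDdef]; ring
    · have hf_eq : f n = 0 := by rw [hfdef]; exact if_neg hcond
      rw [hf_eq]
      exact mul_nonneg (mul_nonneg hA.le hlam.le) (hg0 n)
  -- summability of the geometric majorant and of g, f
  have hgeom : Summable (fun n : ℕ => if k ≤ n then r ^ (n - k) else 0) := by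
    apply Summable.of_nonneg_of_le (fun n => by positivity)
      (fun n => ?_) ((summable_geometric_of_lt_one hr0.le hr1).mul_left ((r ^ k)⁻¹))
    by_cases h : k ≤ n
    · rw [if_pos h, inv_mul_eq_div, le_div_iff₀ (by positivity : (0:ℝ) < r ^ k), ← pow_add]
      apply le_of_eq
      congr 1
      omega
    · rw [if_neg h]
      positivity
  have hgle : ∀ n, g n ≤ (∑' x : ℤ, ‖Bk x‖) * (if k ≤ n then r ^ (n - k) else 0) := by
    intro n
    by_cases h : k ≤ n
    · have hg_eq : g n = ((2 : ℝ) ^ k / 2 ^ n) ^ γ * ∑' x : ℤ, ‖Bs n x‖ := by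
        rw [hgdef]; exact if_pos h
      rw [hg_eq, if_pos h, hratio n h, mul_comm (∑' x : ℤ, ‖Bk x‖) (r ^ (n - k))]
      exact mul_le_mul_of_nonneg_left (hBsle n) (by positivity)
    · have hg_eq : g n = 0 := by rw [hgdef]; exact if_neg h
      rw [hg_eq, if_neg h, mul_zero]
  have hgsummable : Summable g :=
    Summable.of_nonneg_of_le hg0 hgle (hgeom.mul_left _)
  have hf0 : ∀ n, 0 ≤ f n := by
    intro n
    rw [hfdef]
    dsimp only
    split_ifs
    · exact norm_nonneg _
    · exact le_rfl
  have hfsummable : Summable f :=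
    Summable.of_nonneg_of_le hf0 key (hgsummable.mul_left _)
  have hgsum0 : 0 ≤ ∑' n, g n := tsum_nonneg hg0
  have hmain : ∑' n, f n ≤ A * lam * ∑' n, g n := by
    calc ∑' n, f n ≤ ∑' n, A * lam * g n :=
        Summable.tsum_le_tsum key hfsummable (hgsummable.mul_left _)
      _ = A * lam * ∑' n, g n := tsum_mul_left
  constructor
  · refine hmain.trans ?_
    have hinv : 0 ≤ (1 - r)⁻¹ := by positivity
    nlinarith [mul_nonneg (mul_nonneg (mul_nonneg hA.le hlam.le) hgsum0) hinv]
  · refine hmain.trans ?_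
    have hgBk : ∑' n, g n ≤ (∑' x : ℤ, ‖Bk x‖) * (1 - r)⁻¹ := by
      calc ∑' n, g n ≤ ∑' n, (∑' x : ℤ, ‖Bk x‖) * (if k ≤ n then r ^ (n - k) else 0) :=
          Summable.tsum_le_tsum hgle hgsummable (hgeom.mul_left _)
        _ = (∑' x : ℤ, ‖Bk x‖) * ∑' n : ℕ, (if k ≤ n then r ^ (n - k) else 0) := tsum_mul_left
        _ = (∑' x : ℤ, ‖Bk x‖) * (1 - r)⁻¹ := by rw [tsum_shift_geom k hr0.le hr1]
    have hinv : 0 ≤ (1 - r)⁻¹ := by positivity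
    calc A * lam * ∑' n, g n ≤ A * lam * ((∑' x : ℤ, ‖Bk x‖) * (1 - r)⁻¹) :=
        mul_le_mul_of_nonneg_left hgBk (by positivity)
      _ ≤ A * (1 + (1 - r)⁻¹) * lam * ∑' x : ℤ, ‖Bk x‖ := by
        nlinarith [mul_nonneg (mul_nonneg hA.le hlam.le) hBk0]
end
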